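/- arXiv:1108.1210 — 4 statements merged into one kernel-verified Lean document; each statement's English description precedes it below -/
import Mathlib

section
/- Let p ∈ ℝ, let n ≥ 1, and for i = 1,…,n let (Ω_i, μ_i) be finite probability spaces with positive atoms and let L_i be generators as in the setup, each satisfying the p-logSob inequality (with respect to (Ω_i, μ_i)) with constant C_i > 0. On the product space (Ω, μ) = (Ω₁×···×Ω_n, μ₁⊗···⊗μ_n), define L by (Lf)(x) = Σ_{i=1}^n (L_i g_{i,x})(x_i), where g_{i,x} : Ω_i → ℝ is the function y ↦ f(x₁,…,x_{i−1}, y, x_{i+1},…,x_n). Then L satisfies the p-logSob inequality on (Ω, μ) with constant C = max(C₁,…,C_n). -/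
open Real Finset

noncomputable section

variable {Ω : Type*}

/-- Expectation `E f = ∑ ω, μ ω * f ω`. -/
def pexp [Fintype Ω] (μ : Ω → ℝ) (f : Ω → ℝ) : ℝ := ∑ ω, μ ω * f ω

/-- Dirichlet form `𝓔(f,g) = E[f · L g]`. -/
def dform [Fintype Ω] (μ : Ω → ℝ) (L : (Ω → ℝ) →ₗ[ℝ] (Ω → ℝ)) (f g : Ω → ℝ) : ℝ :=
  pexp μ fun ω => f ω * L g ω

/-- Entropy `Ent(f) = E[f log f] − (E f) log (E f)`. -/
def entE [Fintype Ω] (μ : Ω → ℝ) (f : Ω → ℝ) : ℝ :=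
  pexp μ (fun ω => f ω * Real.log (f ω)) - pexp μ f * Real.log (pexp μ f)

/-- Variance `Var(f) = E[f²] − (E f)²`. -/
def varE [Fintype Ω] (μ : Ω → ℝ) (f : Ω → ℝ) : ℝ :=
  pexp μ (fun ω => f ω ^ 2) - (pexp μ f) ^ 2

/-- The structural conditions on the Markov generator `L`: `L 1 = 0`, self-adjointness,
positive semidefiniteness, and nonnegativity of `L f` at a global maximum point of `f`. -/
def IsGen [Fintype Ω] (μ : Ω → ℝ) (L : (Ω → ℝ) →ₗ[ℝ] (Ω → ℝ)) : Prop :=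
  L (fun _ => 1) = 0 ∧
  (∀ f g, pexp μ (fun ω => f ω * L g ω) = pexp μ (fun ω => g ω * L f ω)) ∧
  (∀ f, 0 ≤ pexp μ (fun ω => f ω * L f ω)) ∧
  (∀ (f : Ω → ℝ) (ω : Ω), (∀ x, f x ≤ f ω) → 0 ≤ L f ω)

/-- The `p`-logSob inequality with constant `C` (with the conventions for `p = 0` and `p = 1`). -/
def LogSob [Fintype Ω] (μ : Ω → ℝ) (L : (Ω → ℝ) →ₗ[ℝ] (Ω → ℝ)) (p C : ℝ) : Prop :=
  if p = 0 then
    ∀ f : Ω → ℝ, (∀ ω, 0 < f ω) →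
      varE μ (fun ω => Real.log (f ω)) ≤ -(C / 2) * dform μ L f (fun ω => (f ω)⁻¹)
  else if p = 1 then
    ∀ f : Ω → ℝ, (∀ ω, 0 < f ω) →
      entE μ f ≤ C / 4 * dform μ L f (fun ω => Real.log (f ω))
  else
    ∀ f : Ω → ℝ, (∀ ω, 0 < f ω) →
      entE μ (fun ω => f ω ^ p) ≤
        C * p ^ 2 / (4 * (p - 1)) * dform μ L (fun ω => f ω ^ (p - 1)) f

/-- Markov semigroup `T t = e^{-tL}`. -/
def heat [Fintype Ω] (L : (Ω → ℝ) →ₗ[ℝ] (Ω → ℝ)) (t : ℝ) (f : Ω → ℝ) : Ω → ℝ :=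
  NormedSpace.exp ((-t) • (LinearMap.toContinuousLinearMap L)) f

/-- `‖f‖_p` for positive `f` and arbitrary real `p`, with `‖f‖_0 = exp (E log f)`. -/
def pnorm [Fintype Ω] (μ : Ω → ℝ) (p : ℝ) (f : Ω → ℝ) : ℝ :=
  if p = 0 then Real.exp (pexp μ fun ω => Real.log (f ω))
  else (pexp μ fun ω => f ω ^ p) ^ (1 / p)

/-- `‖f‖_p = (E |f|^p)^{1/p}` for real-valued `f`. -/
def pnormAbs [Fintype Ω] (μ : Ω → ℝ) (p : ℝ) (f : Ω → ℝ) : ℝ :=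
  (pexp μ fun ω => |f ω| ^ p) ^ (1 / p)

/-- Hölder conjugate `p' = p/(p-1)`, with the convention `0' = 0`. -/
def hconj (p : ℝ) : ℝ := if p = 0 then 0 else p / (p - 1)

/-- The simple generator `L = Id − E`. -/
def simpleL [Fintype Ω] (μ : Ω → ℝ) : (Ω → ℝ) →ₗ[ℝ] (Ω → ℝ) where
  toFun f := fun ω => f ω - pexp μ f
  map_add' f g := by
    funext ω
    simp only [Pi.add_apply, pexp, mul_add, Finset.sum_add_distrib]
    ring
  map_smul' c f := by
    funext ω
    simp only [Pi.smul_apply, smul_eq_mul, pexp, RingHom.id_apply]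
    rw [mul_sub, Finset.mul_sum]
    congr 1
    exact Finset.sum_congr rfl fun x _ => by ring

/-- The tensorized generator on a product space. -/
def tensorL {n : ℕ} (X : Fin n → Type*) [∀ i, Fintype (X i)] [∀ i, DecidableEq (X i)]
    (L : ∀ i, (X i → ℝ) →ₗ[ℝ] (X i → ℝ)) :
    ((∀ i, X i) → ℝ) →ₗ[ℝ] ((∀ i, X i) → ℝ) where
  toFun f := fun x => ∑ i, L i (fun y => f (Function.update x i y)) (x i)
  map_add' f g := by
    funext x
    simp only [Pi.add_apply]
    rw [← Finset.sum_add_distrib]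
    refine Finset.sum_congr rfl fun i _ => ?_
    have h : (fun y => f (Function.update x i y) + g (Function.update x i y)) =
        (fun y => f (Function.update x i y)) + fun y => g (Function.update x i y) := rfl
    rw [h, map_add]
    rfl
  map_smul' c f := by
    funext x
    simp only [Pi.smul_apply, smul_eq_mul, RingHom.id_apply]
    rw [Finset.mul_sum]
    refine Finset.sum_congr rfl fun i _ => ?_
    have h : (fun y => c * f (Function.update x i y)) =
        c • fun y => f (Function.update x i y) := rfl
    rw [h, map_smul]
    rfl


set_option linter.unusedSectionVars false
set_option linter.unreachableTactic false
set_option linter.unusedTactic false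

section Basic

lemma young (u m v : ℝ) (hu : 0 < u) (hm : 0 < m) :
    u * v ≤ u * log u - u * log m - u + m * exp v := by
  have h := Real.add_one_le_exp (v - log u + log m)
  have h2 : exp (v - log u + log m) = m * exp v / u := by
    rw [exp_add, exp_sub, exp_log hu, exp_log hm]; ring
  rw [h2] at h
  have h3 := mul_le_mul_of_nonneg_left h hu.le
  have h4 : u * (m * exp v / u) = m * exp v := by field_simp
  nlinarith [h3, h4]

variable [Fintype Ω] {μ : Ω → ℝ}

lemma nonempty_of_sum_one (hμ1 : ∑ ω, μ ω = 1) : Nonempty Ω := by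
  by_contra h
  rw [not_nonempty_iff] at h
  rw [Finset.sum_of_isEmpty] at hμ1
  norm_num at hμ1

lemma pexp_pos (hμ : ∀ ω, 0 < μ ω) (hμ1 : ∑ ω, μ ω = 1) {f : Ω → ℝ}
    (hf : ∀ ω, 0 < f ω) : 0 < pexp μ f := by
  have : Nonempty Ω := nonempty_of_sum_one hμ1
  exact Finset.sum_pos (fun ω _ => mul_pos (hμ ω) (hf ω)) univ_nonempty

lemma pexp_mono (hμ : ∀ ω, 0 ≤ μ ω) {f g : Ω → ℝ} (h : ∀ ω, f ω ≤ g ω) :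
    pexp μ f ≤ pexp μ g :=
  Finset.sum_le_sum fun ω _ => mul_le_mul_of_nonneg_left (h ω) (hμ ω)

lemma pexp_const_mul (c : ℝ) (f : Ω → ℝ) :
    pexp μ (fun ω => c * f ω) = c * pexp μ f := by
  simp only [pexp, Finset.mul_sum]; exact Finset.sum_congr rfl fun ω _ => by ring

lemma pexp_sub (f g : Ω → ℝ) :
    pexp μ (fun ω => f ω - g ω) = pexp μ f - pexp μ g := by
  simp only [pexp, ← Finset.sum_sub_distrib]; exact Finset.sum_congr rfl fun ω _ => by ring

lemma pexp_add (f g : Ω → ℝ) :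
    pexp μ (fun ω => f ω + g ω) = pexp μ f + pexp μ g := by
  simp only [pexp, ← Finset.sum_add_distrib]; exact Finset.sum_congr rfl fun ω _ => by ring

lemma pexp_sum {ι : Type*} (s : Finset ι) (f : ι → Ω → ℝ) :
    pexp μ (fun ω => ∑ k ∈ s, f k ω) = ∑ k ∈ s, pexp μ (f k) := by
  simp only [pexp, Finset.mul_sum]
  exact Finset.sum_comm

/-- Cauchy–Schwarz for `pexp`. -/
lemma pexp_cs (hμ : ∀ ω, 0 ≤ μ ω) (f g : Ω → ℝ) :
    (pexp μ (fun ω => f ω * g ω)) ^ 2 ≤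
      pexp μ (fun ω => f ω ^ 2) * pexp μ (fun ω => g ω ^ 2) := by
  have h := Finset.sum_mul_sq_le_sq_mul_sq univ
    (fun ω => Real.sqrt (μ ω) * f ω) (fun ω => Real.sqrt (μ ω) * g ω)
  have e : ∀ ω : Ω, (Real.sqrt (μ ω) * f ω) * (Real.sqrt (μ ω) * g ω) = μ ω * (f ω * g ω) := by
    intro ω
    have h0 : Real.sqrt (μ ω) * Real.sqrt (μ ω) = μ ω := Real.mul_self_sqrt (hμ ω)
    calc (Real.sqrt (μ ω) * f ω) * (Real.sqrt (μ ω) * g ω)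
        = (Real.sqrt (μ ω) * Real.sqrt (μ ω)) * (f ω * g ω) := by ring
      _ = μ ω * (f ω * g ω) := by rw [h0]
  have e2 : ∀ ω : Ω, (Real.sqrt (μ ω) * f ω) ^ 2 = μ ω * f ω ^ 2 := by
    intro ω
    rw [mul_pow, Real.sq_sqrt (hμ ω)]
  have e3 : ∀ ω : Ω, (Real.sqrt (μ ω) * g ω) ^ 2 = μ ω * g ω ^ 2 := by
    intro ω
    rw [mul_pow, Real.sq_sqrt (hμ ω)]
  simp only [e, e2, e3] at h
  exact h

lemma varE_nonneg (hμ : ∀ ω, 0 ≤ μ ω) (hμ1 : ∑ ω, μ ω = 1) (f : Ω → ℝ) :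
    0 ≤ varE μ f := by
  have h := pexp_cs hμ f (fun _ => 1)
  simp only [mul_one, one_pow] at h
  have : pexp μ (fun _ : Ω => (1:ℝ)) = 1 := by simp [pexp, hμ1]
  rw [this, mul_one] at h
  simpa [varE, sub_nonneg] using h

/-- Conditional duality. -/
lemma cond_dual (hμ : ∀ ω, 0 < μ ω) (hμ1 : ∑ ω, μ ω = 1) (F v : Ω → ℝ)
    (hF : ∀ ω, 0 < F ω) (hv : ∑ ω, μ ω * exp (v ω) ≤ 1) :
    pexp μ (fun ω => F ω * v ω) ≤ entE μ F := by
  have hm : 0 < pexp μ F := pexp_pos hμ hμ1 hF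
  obtain ⟨m, hmdef⟩ : ∃ m, pexp μ F = m := ⟨_, rfl⟩
  rw [hmdef] at hm
  have key : ∀ ω : Ω, μ ω * (F ω * v ω) ≤
      μ ω * (F ω * log (F ω)) - μ ω * (F ω * log m) - μ ω * F ω + μ ω * (m * exp (v ω)) := by
    intro ω
    have := young (F ω) m (v ω) (hF ω) hm
    nlinarith [this, (hμ ω).le, mul_le_mul_of_nonneg_left this (hμ ω).le]
  have h1 : pexp μ (fun ω => F ω * v ω) ≤
      pexp μ (fun ω => F ω * log (F ω)) - m * log m - m + m * ∑ ω, μ ω * exp (v ω) := by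
    have := Finset.sum_le_sum (fun ω (_ : ω ∈ univ) => key ω)
    calc pexp μ (fun ω => F ω * v ω) = ∑ ω, μ ω * (F ω * v ω) := rfl
      _ ≤ ∑ ω, (μ ω * (F ω * log (F ω)) - μ ω * (F ω * log m) - μ ω * F ω
            + μ ω * (m * exp (v ω))) := this
      _ = pexp μ (fun ω => F ω * log (F ω)) - m * log m - m + m * ∑ ω, μ ω * exp (v ω) := by
          rw [Finset.sum_add_distrib, Finset.sum_sub_distrib, Finset.sum_sub_distrib]
          have a1 : ∑ ω, μ ω * (F ω * log m) = m * log m := by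
            rw [← hmdef]
            rw [show (∑ ω, μ ω * (F ω * log (pexp μ F))) = (∑ ω, (μ ω * F ω)) * log (pexp μ F) from by
              rw [Finset.sum_mul]; exact Finset.sum_congr rfl fun ω _ => by ring]
            rfl
          have a2 : (∑ ω, μ ω * F ω) = m := hmdef
          have a3 : ∑ ω, μ ω * (m * exp (v ω)) = m * ∑ ω, μ ω * exp (v ω) := by
            rw [Finset.mul_sum]
            exact Finset.sum_congr rfl fun ω _ => by ring
          rw [a1, a2, a3]
          simp only [pexp]
  have h2 : m * ∑ ω, μ ω * exp (v ω) ≤ m * 1 := mul_le_mul_of_nonneg_left hv hm.le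
  have : pexp μ (fun ω => F ω * v ω) ≤ pexp μ (fun ω => F ω * log (F ω)) - m * log m := by
    linarith
  rw [entE, hmdef]
  exact this

lemma entE_shift (μ : Ω → ℝ) (F : Ω → ℝ) :
    pexp μ (fun ω => F ω * (Real.log (F ω) - Real.log (pexp μ F))) = entE μ F := by
  unfold entE pexp
  rw [show (∑ ω, μ ω * (F ω * (Real.log (F ω) - Real.log (∑ ω, μ ω * F ω)))) =
      ∑ ω, (μ ω * (F ω * Real.log (F ω)) - (μ ω * F ω) * Real.log (∑ ω, μ ω * F ω)) from
    Finset.sum_congr rfl fun ω _ => by ring]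
  rw [Finset.sum_sub_distrib, ← Finset.sum_mul]

lemma varE_shift (μ : Ω → ℝ) (F : Ω → ℝ) :
    pexp μ (fun ω => F ω * (F ω - pexp μ F)) = varE μ F := by
  unfold varE pexp
  rw [show (∑ ω, μ ω * (F ω * (F ω - ∑ ω, μ ω * F ω))) =
      ∑ ω, (μ ω * F ω ^ 2 - (μ ω * F ω) * ∑ ω, μ ω * F ω) from
    Finset.sum_congr rfl fun ω _ => by ring]
  rw [Finset.sum_sub_distrib, ← Finset.sum_mul, sq]

lemma entE_nonneg (hμ : ∀ ω, 0 < μ ω) (hμ1 : ∑ ω, μ ω = 1) (F : Ω → ℝ)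
    (hF : ∀ ω, 0 < F ω) : 0 ≤ entE μ F := by
  have h := cond_dual hμ hμ1 F (fun _ => 0) hF (by simp [hμ1])
  simpa [pexp] using h

end Basic

section Prod

variable {n : ℕ} {X : Fin n → Type*} [∀ i, Fintype (X i)] [∀ i, DecidableEq (X i)]

def Ei (μ : ∀ i, X i → ℝ) (i : Fin n) (h : (∀ j, X j) → ℝ) : (∀ j, X j) → ℝ :=
  fun x => ∑ t, μ i t * h (Function.update x i t)

def ww (μ : ∀ i, X i → ℝ) (S : Finset (Fin n)) (x y : ∀ j, X j) : ℝ :=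
  ∏ j, if j ∈ S then μ j (y j) else (if y j = x j then 1 else 0)

def ES (μ : ∀ i, X i → ℝ) (S : Finset (Fin n)) (h : (∀ j, X j) → ℝ) : (∀ j, X j) → ℝ :=
  fun x => ∑ y, ww μ S x y * h y

def muP (μ : ∀ i, X i → ℝ) : (∀ j, X j) → ℝ := fun x => ∏ i, μ i (x i)

def InvS (S : Finset (Fin n)) (k : (∀ j, X j) → ℝ) : Prop :=
  ∀ x y, (∀ j, j ∉ S → x j = y j) → k x = k y

variable (μ : ∀ i, X i → ℝ)

lemma ww_nonneg (hμ : ∀ i ω, 0 < μ i ω) (S : Finset (Fin n)) (x y : ∀ j, X j) :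
    0 ≤ ww μ S x y := by
  apply Finset.prod_nonneg
  intro j _
  by_cases h : j ∈ S
  · simp [h, (hμ j (y j)).le]
  · by_cases h2 : y j = x j <;> simp [h, h2]

lemma ww_self_pos (hμ : ∀ i ω, 0 < μ i ω) (S : Finset (Fin n)) (x : ∀ j, X j) :
    0 < ww μ S x x := by
  apply Finset.prod_pos
  intro j _
  by_cases h : j ∈ S
  · simp [h, hμ j (x j)]
  · simp [h]

lemma ww_sum_one (hμ1 : ∀ i, ∑ ω, μ i ω = 1) (S : Finset (Fin n)) (x : ∀ j, X j) :
    ∑ y, ww μ S x y = 1 := by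
  have key := Finset.prod_univ_sum (fun j : Fin n => (univ : Finset (X j)))
    (fun j t => if j ∈ S then μ j t else (if t = x j then (1:ℝ) else 0))
  rw [Fintype.piFinset_univ] at key
  unfold ww
  rw [← key]
  rw [Finset.prod_eq_one]
  intro j _
  by_cases h : j ∈ S
  · simp only [h, if_true]; exact hμ1 j
  · simp only [h, if_false]
    rw [Finset.sum_ite_eq' univ (x j) (fun _ => (1:ℝ))]
    simp

lemma ww_support (S : Finset (Fin n)) (x y : ∀ j, X j) (h : ww μ S x y ≠ 0) :
    ∀ j, j ∉ S → y j = x j := by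
  intro j hj
  by_contra hne
  apply h
  apply Finset.prod_eq_zero (Finset.mem_univ j)
  simp [hj, hne]

lemma muP_pos (hμ : ∀ i ω, 0 < μ i ω) (x : ∀ j, X j) : 0 < muP μ x :=
  Finset.prod_pos fun i _ => hμ i (x i)

lemma ES_empty (h : (∀ j, X j) → ℝ) : ES μ ∅ h = h := by
  funext x
  unfold ES ww
  rw [Finset.sum_eq_single x]
  · simp
  · intro y _ hy
    have : ∃ j, y j ≠ x j := by
      by_contra hc
      push_neg at hc
      exact hy (funext hc)
    obtain ⟨j, hj⟩ := this
    rw [Finset.prod_eq_zero (Finset.mem_univ j)]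
    · ring
    · simp [hj]
  · intro hx; exact absurd (Finset.mem_univ x) hx

lemma ES_univ (h : (∀ j, X j) → ℝ) (x : ∀ j, X j) :
    ES μ Finset.univ h x = pexp (muP μ) h := by
  unfold ES ww pexp muP
  exact Finset.sum_congr rfl fun y _ => by simp

lemma ES_inv (S : Finset (Fin n)) (h : (∀ j, X j) → ℝ) : InvS S (ES μ S h) := by
  intro x x' hx
  unfold ES
  refine Finset.sum_congr rfl fun y _ => ?_
  congr 1
  unfold ww
  refine Finset.prod_congr rfl fun j _ => ?_
  by_cases hj : j ∈ S
  · simp [hj]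
  · simp only [hj, if_false, hx j hj]

lemma InvS_mono {S T : Finset (Fin n)} (hST : S ⊆ T) {k : (∀ j, X j) → ℝ}
    (h : InvS T k) : InvS S k := by
  intro x y hxy
  exact h x y fun j hj => hxy j (fun hjS => hj (hST hjS))

lemma InvS_update {S : Finset (Fin n)} {k : (∀ j, X j) → ℝ} (h : InvS S k)
    {i : Fin n} (hi : i ∈ S) (x : ∀ j, X j) (t : X i) :
    k (Function.update x i t) = k x := by
  refine (h x (Function.update x i t) ?_).symm
  intro j hj
  have : j ≠ i := fun he => hj (he ▸ hi)
  rw [Function.update_of_ne this]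

lemma ES_insert {S : Finset (Fin n)} {i : Fin n} (hi : i ∉ S) (h : (∀ j, X j) → ℝ) :
    ES μ (insert i S) h = Ei μ i (ES μ S h) := by
  funext x
  have key : ∀ t : X i, ∀ y : ∀ j, X j, ww μ S (Function.update x i t) y =
      (if y i = t then (1:ℝ) else 0) *
        ∏ j ∈ univ.erase i, (if j ∈ S then μ j (y j) else (if y j = x j then 1 else 0)) := by
    intro t y
    unfold ww
    rw [← Finset.mul_prod_erase univ _ (Finset.mem_univ i)]
    congr 1
    · simp [hi, Function.update_self]
    · refine Finset.prod_congr rfl fun j hj => ?_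
      have hji : j ≠ i := Finset.ne_of_mem_erase hj
      by_cases hjS : j ∈ S
      · simp [hjS]
      · simp only [hjS, if_false, Function.update_of_ne hji]
  have key2 : ∀ y : ∀ j, X j, ww μ (insert i S) x y =
      μ i (y i) * ∏ j ∈ univ.erase i, (if j ∈ S then μ j (y j) else (if y j = x j then 1 else 0)) := by
    intro y
    unfold ww
    rw [← Finset.mul_prod_erase univ _ (Finset.mem_univ i)]
    congr 1
    · simp [Finset.mem_insert]
    · refine Finset.prod_congr rfl fun j hj => ?_
      have hji : j ≠ i := Finset.ne_of_mem_erase hj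
      simp [Finset.mem_insert, hji]
  show _ = ∑ t, μ i t * ∑ y, ww μ S (Function.update x i t) y * h y
  calc ∑ y, ww μ (insert i S) x y * h y
      = ∑ y, ∑ t, μ i t * (ww μ S (Function.update x i t) y * h y) := by
        refine Finset.sum_congr rfl fun y _ => ?_
        simp only [key, key2]
        rw [Finset.sum_congr rfl (fun t (_ : t ∈ univ) =>
          show μ i t * ((if y i = t then (1:ℝ) else 0) *
              (∏ j ∈ univ.erase i, (if j ∈ S then μ j (y j) else (if y j = x j then 1 else 0))) * h y)
            = (if y i = t then μ i t *
              ((∏ j ∈ univ.erase i, (if j ∈ S then μ j (y j) else (if y j = x j then 1 else 0))) * h y) else 0)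
            from by split <;> simp <;> ring)]
        rw [Finset.sum_ite_eq univ (y i)]
        simp [mul_assoc]
    _ = ∑ t, μ i t * ∑ y, ww μ S (Function.update x i t) y * h y := by
        rw [Finset.sum_comm]
        exact Finset.sum_congr rfl fun t _ => by rw [Finset.mul_sum]

end Prod

section Prod2
variable {n : ℕ} {X : Fin n → Type*} [∀ i, Fintype (X i)] [∀ i, DecidableEq (X i)]
variable (μ : ∀ i, X i → ℝ)

/-- the coordinate swap involution -/
def swapE (i : Fin n) : ((∀ j, X j) × X i) ≃ ((∀ j, X j) × X i) where
  toFun p := (Function.update p.1 i p.2, p.1 i)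
  invFun p := (Function.update p.1 i p.2, p.1 i)
  left_inv p := by
    simp only [Function.update_self]
    rw [Function.update_idem, Function.update_eq_self]
  right_inv p := by
    simp only [Function.update_self]
    rw [Function.update_idem, Function.update_eq_self]

lemma muP_update (i : Fin n) (x : ∀ j, X j) (t : X i) :
    muP μ (Function.update x i t) * μ i (x i) = muP μ x * μ i t := by
  unfold muP
  have e1 : ∀ y : ∀ j, X j, (∏ j, μ j (y j)) = μ i (y i) * ∏ j ∈ univ.erase i, μ j (y j) :=
    fun y => (Finset.mul_prod_erase univ (fun j => μ j (y j)) (Finset.mem_univ i)).symm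
  rw [e1, e1 x]
  have e2 : ∏ j ∈ univ.erase i, μ j (Function.update x i t j) = ∏ j ∈ univ.erase i, μ j (x j) :=
    Finset.prod_congr rfl fun j hj =>
      by rw [Function.update_of_ne (Finset.ne_of_mem_erase hj)]
  rw [e2, Function.update_self]
  ring

/-- Fubini in one coordinate. -/
lemma pexp_Ei (hμ1 : ∀ i, ∑ ω, μ i ω = 1) (i : Fin n) (h : (∀ j, X j) → ℝ) :
    pexp (muP μ) (fun x => ∑ t, μ i t * h (Function.update x i t)) = pexp (muP μ) h := by
  unfold pexp
  have lhs : (∑ x, muP μ x * ∑ t, μ i t * h (Function.update x i t))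
      = ∑ p : (∀ j, X j) × X i, muP μ p.1 * μ i p.2 * h (Function.update p.1 i p.2) := by
    rw [Fintype.sum_prod_type]
    refine Finset.sum_congr rfl fun x _ => ?_
    rw [Finset.mul_sum]
    exact Finset.sum_congr rfl fun t _ => by ring
  rw [lhs]
  rw [← Equiv.sum_comp (swapE i) (fun p => muP μ p.1 * μ i p.2 * h (Function.update p.1 i p.2))]
  have : ∀ p : (∀ j, X j) × X i,
      muP μ ((swapE i) p).1 * μ i ((swapE i) p).2 * h (Function.update ((swapE i) p).1 i ((swapE i) p).2)
      = muP μ p.1 * μ i p.2 * h p.1 := by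
    intro ⟨x, t⟩
    show muP μ (Function.update x i t) * μ i (x i) * h (Function.update (Function.update x i t) i (x i)) = _
    rw [Function.update_idem, Function.update_eq_self, muP_update]
  rw [Finset.sum_congr rfl fun p _ => this p]
  rw [Fintype.sum_prod_type]
  refine Finset.sum_congr rfl fun x _ => ?_
  simp only
  rw [show (∑ y : X i, muP μ x * μ i y * h x) = (muP μ x * h x) * ∑ y : X i, μ i y from by
    rw [Finset.mul_sum]; exact Finset.sum_congr rfl fun y _ => by ring]
  rw [hμ1 i, mul_one]
end Prod2


section Prod3
variable {n : ℕ} {X : Fin n → Type*} [∀ i, Fintype (X i)] [∀ i, DecidableEq (X i)]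
variable (μ : ∀ i, X i → ℝ)

lemma pexp_ES_inv (hμ1 : ∀ i, ∑ ω, μ i ω = 1) (S : Finset (Fin n))
    (h k : (∀ j, X j) → ℝ) (hk : InvS S k) :
    pexp (muP μ) (fun x => h x * k x) = pexp (muP μ) (fun x => ES μ S h x * k x) := by
  induction S using Finset.induction_on with
  | empty => rw [ES_empty]
  | @insert i S hi ih =>
    have hkS : InvS S k := InvS_mono (Finset.subset_insert i S) hk
    rw [ih hkS]
    rw [← pexp_Ei μ hμ1 i (fun x => ES μ S h x * k x)]
    refine congrArg (pexp (muP μ)) (funext fun x => ?_)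
    rw [ES_insert μ hi]
    have hki : ∀ t, k (Function.update x i t) = k x :=
      fun t => InvS_update hk (Finset.mem_insert_self i S) x t
    unfold Ei
    rw [Finset.sum_mul]
    refine Finset.sum_congr rfl fun t _ => ?_
    rw [hki t]
    ring

lemma pexp_ES (hμ1 : ∀ i, ∑ ω, μ i ω = 1) (S : Finset (Fin n)) (h : (∀ j, X j) → ℝ) :
    pexp (muP μ) (ES μ S h) = pexp (muP μ) h := by
  have h1 := pexp_ES_inv μ hμ1 S h (fun _ => 1) (fun _ _ _ => rfl)
  simp only [mul_one] at h1
  exact h1.symm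

lemma ES_pos (hμ : ∀ i ω, 0 < μ i ω) (S : Finset (Fin n)) {h : (∀ j, X j) → ℝ}
    (hh : ∀ x, 0 < h x) (x : ∀ j, X j) : 0 < ES μ S h x := by
  have h1 : 0 < ww μ S x x * h x := mul_pos (ww_self_pos μ hμ S x) (hh x)
  have h2 : ww μ S x x * h x ≤ ∑ y, ww μ S x y * h y :=
    Finset.single_le_sum (fun y _ => mul_nonneg (ww_nonneg μ hμ S x y) (hh y).le)
      (Finset.mem_univ x)
  exact lt_of_lt_of_le h1 h2

/-- prefix sets of coordinates -/
def QS (n k : ℕ) : Finset (Fin n) := univ.filter (fun j => (j : ℕ) < k)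

lemma QS_zero : QS n 0 = ∅ := by
  ext j; simp [QS]

lemma QS_last : QS n n = univ := by
  ext j; simp [QS, j.isLt]

lemma QS_not_mem {k : ℕ} (hk : k < n) : (⟨k, hk⟩ : Fin n) ∉ QS n k := by
  simp [QS]

lemma QS_succ {k : ℕ} (hk : k < n) : QS n (k + 1) = insert ⟨k, hk⟩ (QS n k) := by
  ext j
  simp only [QS, Finset.mem_filter, Finset.mem_univ, true_and, Finset.mem_insert]
  rw [Nat.lt_succ_iff_lt_or_eq, Fin.ext_iff]
  tauto

lemma Ei_update (i : Fin n) (h : (∀ j, X j) → ℝ) (x : ∀ j, X j) (t : X i) :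
    Ei μ i h (Function.update x i t) = Ei μ i h x := by
  unfold Ei
  exact Finset.sum_congr rfl fun s _ => by rw [Function.update_idem]

/-- subadditivity of entropy over a product -/
lemma ent_subadd (hμ : ∀ i ω, 0 < μ i ω) (hμ1 : ∀ i, ∑ ω, μ i ω = 1)
    (F : (∀ j, X j) → ℝ) (hF : ∀ x, 0 < F x) :
    entE (muP μ) F ≤
      ∑ i, pexp (muP μ) (fun x => entE (μ i) (fun t => F (Function.update x i t))) := by
  have hμP : ∀ x, (0:ℝ) ≤ muP μ x := fun x => (muP_pos μ hμ x).le
  set TT : ℕ → ℝ := fun k =>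
    if hk : k < n then
      pexp (muP μ) (fun x => entE (μ ⟨k, hk⟩)
        (fun t => F (Function.update x ⟨k, hk⟩ t)))
    else 0 with hTT
  have step : ∀ k ∈ Finset.range n,
      pexp (muP μ) (fun x => F x *
        (Real.log (ES μ (QS n k) F x) - Real.log (ES μ (QS n (k+1)) F x))) ≤ TT k := by
    intro k hkr
    have hk : k < n := Finset.mem_range.mp hkr
    set i : Fin n := ⟨k, hk⟩ with hidef
    set a : (∀ j, X j) → ℝ := ES μ (QS n k) F with hadef
    set b : (∀ j, X j) → ℝ := ES μ (QS n (k+1)) F with hbdef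
    have hab : b = Ei μ i a := by
      rw [hbdef, hadef, QS_succ hk, ES_insert μ (QS_not_mem hk)]
    have ha : ∀ x, 0 < a x := fun x => ES_pos μ hμ _ hF x
    have hb : ∀ x, 0 < b x := fun x => ES_pos μ hμ _ hF x
    have hbInv : InvS (QS n (k+1)) b := ES_inv μ _ F
    have hbx : ∀ (x : ∀ j, X j) (t : X i), b (Function.update x i t) = b x := by
      intro x t
      exact InvS_update hbInv (by rw [QS_succ hk]; exact Finset.mem_insert_self _ _) x t
    simp only [hTT]
    rw [dif_pos hk]
    rw [← pexp_Ei μ hμ1 i (fun x => F x * (Real.log (a x) - Real.log (b x)))]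
    apply pexp_mono hμP
    intro x
    -- conditional duality in coordinate i
    have hv : ∑ t, μ i t * Real.exp
        (Real.log (a (Function.update x i t)) - Real.log (b x)) ≤ 1 := by
      have : ∀ t : X i, Real.exp (Real.log (a (Function.update x i t)) - Real.log (b x))
          = a (Function.update x i t) / b x := by
        intro t
        rw [Real.exp_sub, Real.exp_log (ha _), Real.exp_log (hb x)]
      rw [Finset.sum_congr rfl fun t _ => by rw [this t]]
      have : ∑ t, μ i t * (a (Function.update x i t) / b x)
          = (∑ t, μ i t * a (Function.update x i t)) / b x := by
        rw [Finset.sum_div]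
        exact Finset.sum_congr rfl fun t _ => by ring
      rw [this]
      have hEia : (∑ t, μ i t * a (Function.update x i t)) = b x := by
        rw [hab]; rfl
      rw [hEia, div_self (hb x).ne']
    have hcd := cond_dual (hμ i) (hμ1 i)
      (fun t => F (Function.update x i t))
      (fun t => Real.log (a (Function.update x i t)) - Real.log (b x))
      (fun t => hF _) hv
    refine le_trans (le_of_eq ?_) hcd
    unfold pexp
    refine Finset.sum_congr rfl fun t _ => ?_
    rw [hbx x t]
  calc entE (muP μ) F
      = ∑ k ∈ Finset.range n, pexp (muP μ) (fun x => F x *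
          (Real.log (ES μ (QS n k) F x) - Real.log (ES μ (QS n (k+1)) F x))) := by
        rw [← pexp_sum]
        have tele : ∀ x, (∑ k ∈ Finset.range n, F x *
            (Real.log (ES μ (QS n k) F x) - Real.log (ES μ (QS n (k+1)) F x)))
            = F x * (Real.log (F x) - Real.log (pexp (muP μ) F)) := by
          intro x
          rw [← Finset.mul_sum,
            Finset.sum_range_sub' (fun k => Real.log (ES μ (QS n k) F x)) n]
          rw [QS_zero, QS_last, ES_empty, ES_univ]
        rw [show (fun x => ∑ k ∈ Finset.range n, F x *
            (Real.log (ES μ (QS n k) F x) - Real.log (ES μ (QS n (k+1)) F x)))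
            = fun x => F x * (Real.log (F x) - Real.log (pexp (muP μ) F)) from
          funext fun x => tele x]
        exact (entE_shift (muP μ) F).symm
    _ ≤ ∑ k ∈ Finset.range n, TT k := Finset.sum_le_sum step
    _ = ∑ i, pexp (muP μ) (fun x => entE (μ i) (fun t => F (Function.update x i t))) := by
        rw [← Fin.sum_univ_eq_sum_range TT n]
        refine Finset.sum_congr rfl fun i _ => ?_
        rw [hTT]
        simp only [i.isLt, dif_pos, Fin.eta]

end Prod3

section Prod4
variable {n : ℕ} {X : Fin n → Type*} [∀ i, Fintype (X i)] [∀ i, DecidableEq (X i)]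
variable (μ : ∀ i, X i → ℝ)

lemma varE_center {Ω : Type*} [Fintype Ω] (ν : Ω → ℝ) (hν1 : ∑ ω, ν ω = 1) (g : Ω → ℝ) :
    ∑ ω, ν ω * (g ω - pexp ν g) ^ 2 = varE ν g := by
  obtain ⟨c, hc⟩ : ∃ c, pexp ν g = c := ⟨_, rfl⟩
  have hgc : (∑ ω, ν ω * g ω) = c := hc
  rw [hc]
  unfold varE pexp
  rw [hgc]
  rw [show (∑ ω, ν ω * (g ω - c) ^ 2) =
      ∑ ω, (ν ω * g ω ^ 2 - 2 * c * (ν ω * g ω) + c ^ 2 * ν ω) from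
    Finset.sum_congr rfl fun ω _ => by ring]
  rw [Finset.sum_add_distrib, Finset.sum_sub_distrib, ← Finset.mul_sum, ← Finset.mul_sum,
    hgc, hν1]
  ring

/-- subadditivity of variance over a product -/
lemma var_subadd (hμ : ∀ i ω, 0 < μ i ω) (hμ1 : ∀ i, ∑ ω, μ i ω = 1)
    (h : (∀ j, X j) → ℝ) :
    varE (muP μ) h ≤
      ∑ i, pexp (muP μ) (fun x => varE (μ i) (fun t => h (Function.update x i t))) := by
  have hμP : ∀ x, (0:ℝ) ≤ muP μ x := fun x => (muP_pos μ hμ x).le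
  set TT : ℕ → ℝ := fun k =>
    if hk : k < n then
      pexp (muP μ) (fun x => varE (μ ⟨k, hk⟩)
        (fun t => h (Function.update x ⟨k, hk⟩ t)))
    else 0 with hTT
  have step : ∀ k ∈ Finset.range n,
      pexp (muP μ) (fun x => h x * (ES μ (QS n k) h x - ES μ (QS n (k+1)) h x)) ≤ TT k := by
    intro k hkr
    have hk : k < n := Finset.mem_range.mp hkr
    set i : Fin n := ⟨k, hk⟩ with hidef
    set a : (∀ j, X j) → ℝ := ES μ (QS n k) h with hadef
    set b : (∀ j, X j) → ℝ := ES μ (QS n (k+1)) h with hbdef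
    have hab : b = Ei μ i a := by
      rw [hbdef, hadef, QS_succ hk, ES_insert μ (QS_not_mem hk)]
    have hbInv : InvS (QS n (k+1)) b := ES_inv μ _ h
    have hbx : ∀ (x : ∀ j, X j) (t : X i), b (Function.update x i t) = b x := by
      intro x t
      exact InvS_update hbInv (by rw [QS_succ hk]; exact Finset.mem_insert_self _ _) x t
    set Δ : (∀ j, X j) → ℝ := fun x => a x - b x with hΔdef
    have hΔInv : InvS (QS n k) Δ := by
      intro x y hxy
      have h1 := ES_inv μ (QS n k) h x y hxy
      have h2 := (InvS_mono (by rw [QS_succ hk]; exact Finset.subset_insert _ _) hbInv) x y hxy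
      simp only [hΔdef, hadef, hbdef] at *
      rw [h1, h2]
    -- the conditional mean of Δ in coordinate i vanishes
    have hEiΔ : ∀ x, (∑ t, μ i t * Δ (Function.update x i t)) = 0 := by
      intro x
      have : ∀ t : X i, μ i t * Δ (Function.update x i t)
          = μ i t * a (Function.update x i t) - μ i t * b x := by
        intro t
        simp only [hΔdef, hbx x t]
        ring
      rw [Finset.sum_congr rfl fun t _ => this t, Finset.sum_sub_distrib, ← Finset.sum_mul,
        hμ1 i]
      have : (∑ t, μ i t * a (Function.update x i t)) = b x := by rw [hab]; rfl
      rw [this]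
      ring
    -- E[k·Δ] = 0 for any k invariant under coordinate i
    have hkill : ∀ g : (∀ j, X j) → ℝ,
        (∀ (x : ∀ j, X j) (t : X i), g (Function.update x i t) = g x) →
        pexp (muP μ) (fun x => g x * Δ x) = 0 := by
      intro g hg
      rw [← pexp_Ei μ hμ1 i (fun x => g x * Δ x)]
      have : ∀ x : ∀ j, X j, (∑ t, μ i t * (g (Function.update x i t) * Δ (Function.update x i t))) = 0 := by
        intro x
        rw [Finset.sum_congr rfl fun t (_ : t ∈ univ) => show
            μ i t * (g (Function.update x i t) * Δ (Function.update x i t))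
            = g x * (μ i t * Δ (Function.update x i t)) from by rw [hg x t]; ring]
        rw [← Finset.mul_sum, hEiΔ x, mul_zero]
      rw [show (fun x => ∑ t, μ i t * (g (Function.update x i t) * Δ (Function.update x i t)))
          = fun _ => (0:ℝ) from funext this]
      simp [pexp]
    -- E[hΔ] = E[aΔ] = E[Δ²]
    have e1 : pexp (muP μ) (fun x => h x * Δ x) = pexp (muP μ) (fun x => a x * Δ x) :=
      pexp_ES_inv μ hμ1 (QS n k) h Δ hΔInv
    have e2 : pexp (muP μ) (fun x => a x * Δ x) = pexp (muP μ) (fun x => Δ x * Δ x) := by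
      have : ∀ x, a x * Δ x = Δ x * Δ x + b x * Δ x := by
        intro x; simp only [hΔdef]; ring
      rw [show (fun x => a x * Δ x) = fun x => Δ x * Δ x + b x * Δ x from funext this]
      rw [pexp_add, hkill b hbx, add_zero]
    -- E[hΔ] = E[gΔ] with g = h - Ei h
    set g : (∀ j, X j) → ℝ := fun x => h x - Ei μ i h x with hgdef
    have e3 : pexp (muP μ) (fun x => h x * Δ x) = pexp (muP μ) (fun x => g x * Δ x) := by
      have : ∀ x, h x * Δ x = g x * Δ x + Ei μ i h x * Δ x := by
        intro x; simp only [hgdef]; ring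
      rw [show (fun x => h x * Δ x) = fun x => g x * Δ x + Ei μ i h x * Δ x from funext this]
      rw [pexp_add, hkill (Ei μ i h) (Ei_update μ i h), add_zero]
    -- Cauchy–Schwarz
    have hcs := pexp_cs hμP g Δ
    have hA : (0:ℝ) ≤ pexp (muP μ) (fun x => Δ x ^ 2) := by
      unfold pexp
      exact Finset.sum_nonneg fun x _ => mul_nonneg (hμP x) (sq_nonneg _)
    have hB : (0:ℝ) ≤ pexp (muP μ) (fun x => g x ^ 2) := by
      unfold pexp
      exact Finset.sum_nonneg fun x _ => mul_nonneg (hμP x) (sq_nonneg _)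
    have hAB : pexp (muP μ) (fun x => Δ x ^ 2) ≤ pexp (muP μ) (fun x => g x ^ 2) := by
      have hgd : pexp (muP μ) (fun x => g x * Δ x) = pexp (muP μ) (fun x => Δ x ^ 2) := by
        rw [← e3, e1, e2]
        exact congrArg (pexp (muP μ)) (funext fun x => (sq (Δ x)).symm)
      rw [hgd] at hcs
      nlinarith [hcs, hA, hB]
    -- identify E[g²] with the mean conditional variance
    have e4 : pexp (muP μ) (fun x => g x ^ 2)
        = pexp (muP μ) (fun x => varE (μ i) (fun t => h (Function.update x i t))) := by
      rw [← pexp_Ei μ hμ1 i (fun x => g x ^ 2)]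
      refine congrArg (pexp (muP μ)) (funext fun x => ?_)
      have : ∀ t : X i, g (Function.update x i t)
          = h (Function.update x i t) - pexp (μ i) (fun t => h (Function.update x i t)) := by
        intro t
        simp only [hgdef, Ei_update μ i h x t]
        rfl
      rw [Finset.sum_congr rfl fun t (_ : t ∈ univ) => by rw [this t]]
      exact varE_center (μ i) (hμ1 i) (fun t => h (Function.update x i t))
    calc pexp (muP μ) (fun x => h x * (a x - b x))
        = pexp (muP μ) (fun x => Δ x ^ 2) := by
          rw [show (fun x => h x * (a x - b x)) = fun x => h x * Δ x from rfl, e1, e2]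
          exact congrArg (pexp (muP μ)) (funext fun x => by rw [sq])
      _ ≤ pexp (muP μ) (fun x => g x ^ 2) := hAB
      _ = TT k := by
          rw [e4]
          simp only [hTT]
          rw [dif_pos hk]
  calc varE (muP μ) h
      = ∑ k ∈ Finset.range n, pexp (muP μ)
          (fun x => h x * (ES μ (QS n k) h x - ES μ (QS n (k+1)) h x)) := by
        rw [← pexp_sum]
        have tele : ∀ x, (∑ k ∈ Finset.range n,
            h x * (ES μ (QS n k) h x - ES μ (QS n (k+1)) h x))
            = h x * (h x - pexp (muP μ) h) := by
          intro x
          rw [← Finset.mul_sum, Finset.sum_range_sub' (fun k => ES μ (QS n k) h x) n]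
          rw [QS_zero, QS_last, ES_empty, ES_univ]
        rw [show (fun x => ∑ k ∈ Finset.range n,
            h x * (ES μ (QS n k) h x - ES μ (QS n (k+1)) h x))
            = fun x => h x * (h x - pexp (muP μ) h) from funext fun x => tele x]
        exact (varE_shift (muP μ) h).symm
    _ ≤ ∑ k ∈ Finset.range n, TT k := Finset.sum_le_sum step
    _ = ∑ i, pexp (muP μ) (fun x => varE (μ i) (fun t => h (Function.update x i t))) := by
        rw [← Fin.sum_univ_eq_sum_range TT n]
        refine Finset.sum_congr rfl fun i _ => ?_
        simp only [hTT]
        rw [dif_pos i.isLt]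

end Prod4

section Prod5
variable {n : ℕ} {X : Fin n → Type*} [∀ i, Fintype (X i)] [∀ i, DecidableEq (X i)]
variable (μ : ∀ i, X i → ℝ)

lemma tensorL_apply (L : ∀ i, (X i → ℝ) →ₗ[ℝ] (X i → ℝ)) (f : (∀ j, X j) → ℝ)
    (x : ∀ j, X j) :
    tensorL X L f x = ∑ i, L i (fun y => f (Function.update x i y)) (x i) := rfl

lemma dform_tensor (hμ1 : ∀ i, ∑ ω, μ i ω = 1)
    (L : ∀ i, (X i → ℝ) →ₗ[ℝ] (X i → ℝ)) (G f : (∀ j, X j) → ℝ) :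
    dform (muP μ) (tensorL X L) G f
      = ∑ i, pexp (muP μ) (fun x => pexp (μ i) (fun t =>
          G (Function.update x i t) * (L i (fun y => f (Function.update x i y))) t)) := by
  unfold dform
  rw [show (fun x => G x * (tensorL X L) f x)
      = fun x => ∑ i, G x * L i (fun y => f (Function.update x i y)) (x i) from
    funext fun x => by rw [tensorL_apply, Finset.mul_sum]]
  rw [pexp_sum]
  refine Finset.sum_congr rfl fun i _ => ?_
  rw [← pexp_Ei μ hμ1 i (fun x => G x * L i (fun y => f (Function.update x i y)) (x i))]
  refine congrArg (pexp (muP μ)) (funext fun x => ?_)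
  unfold pexp
  refine Finset.sum_congr rfl fun t _ => ?_
  have e1 : (fun y => f (Function.update (Function.update x i t) i y))
      = fun y => f (Function.update x i y) := funext fun y => by rw [Function.update_idem]
  rw [e1, Function.update_self]

end Prod5

lemma bound_bump {Ci Cm A E : ℝ} (hC : 0 < Ci) (hCC : Ci ≤ Cm) (h0 : 0 ≤ E)
    (hE : E ≤ Ci * A) : E ≤ Cm * A := by
  have hA : 0 ≤ A := by nlinarith
  nlinarith [mul_le_mul_of_nonneg_right hCC hA]

-- MORE

/-- tensorization of the `p`-logSob inequality. -/
theorem logSob_tensor {n : ℕ} (hn : 0 < n) (X : Fin n → Type*)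
    [∀ i, Fintype (X i)] [∀ i, DecidableEq (X i)]
    (μ : ∀ i, X i → ℝ) (hμpos : ∀ i ω, 0 < μ i ω) (hμ1 : ∀ i, ∑ ω, μ i ω = 1)
    (L : ∀ i, (X i → ℝ) →ₗ[ℝ] (X i → ℝ)) (hL : ∀ i, IsGen (μ i) (L i))
    (p : ℝ) (C : Fin n → ℝ) (hC : ∀ i, 0 < C i)
    (hLS : ∀ i, LogSob (μ i) (L i) p (C i)) :
    LogSob (fun x : ∀ i, X i => ∏ i, μ i (x i)) (tensorL X L) p
      (Finset.univ.sup' (Finset.univ_nonempty_iff.mpr (Fin.pos_iff_nonempty.mp hn)) C) := by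
  have hne : Nonempty (Fin n) := Fin.pos_iff_nonempty.mp hn
  suffices key : ∀ Cm : ℝ, (∀ i, C i ≤ Cm) →
      LogSob (muP μ) (tensorL X L) p Cm by
    exact key _ (fun i => Finset.le_sup' C (Finset.mem_univ i))
  intro Cm hCC
  have hμP : ∀ x : ∀ j, X j, (0:ℝ) ≤ muP μ x := fun x => (muP_pos μ hμpos x).le
  by_cases hp0 : p = 0
  · -- the case p = 0 : variance
    subst hp0
    unfold LogSob
    rw [if_pos rfl]
    intro f hf
    have hsub := var_subadd μ hμpos hμ1 (fun x => Real.log (f x))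
    have hper : ∀ i : Fin n,
        pexp (muP μ) (fun x => varE (μ i) (fun t => Real.log (f (Function.update x i t))))
        ≤ Cm * (-(1/2) * pexp (muP μ) (fun x => pexp (μ i) (fun t =>
            f (Function.update x i t) * (L i (fun y => (f (Function.update x i y))⁻¹)) t))) := by
      intro i
      have hLSi := hLS i
      unfold LogSob at hLSi
      rw [if_pos rfl] at hLSi
      have hstep : ∀ x : ∀ j, X j,
          varE (μ i) (fun t => Real.log (f (Function.update x i t)))
          ≤ Cm * (-(1/2) * pexp (μ i) (fun t =>
              f (Function.update x i t) * (L i (fun y => (f (Function.update x i y))⁻¹)) t)) := by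
        intro x
        have hle := hLSi (fun t => f (Function.update x i t)) (fun t => hf _)
        have h0 : 0 ≤ varE (μ i) (fun t => Real.log (f (Function.update x i t))) :=
          varE_nonneg (fun ω => (hμpos i ω).le) (hμ1 i) _
        refine bound_bump (hC i) (hCC i) h0 ?_
        refine le_trans hle (le_of_eq ?_)
        unfold dform
        ring
      calc pexp (muP μ) (fun x => varE (μ i) (fun t => Real.log (f (Function.update x i t))))
          ≤ pexp (muP μ) (fun x => Cm * (-(1/2) * pexp (μ i) (fun t =>
              f (Function.update x i t) * (L i (fun y => (f (Function.update x i y))⁻¹)) t))) :=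
            pexp_mono hμP hstep
        _ = Cm * (-(1/2) * pexp (muP μ) (fun x => pexp (μ i) (fun t =>
              f (Function.update x i t) * (L i (fun y => (f (Function.update x i y))⁻¹)) t))) := by
            rw [pexp_const_mul, pexp_const_mul]
    calc varE (muP μ) (fun x => Real.log (f x))
        ≤ ∑ i, pexp (muP μ) (fun x => varE (μ i)
            (fun t => Real.log (f (Function.update x i t)))) := hsub
      _ ≤ ∑ i, Cm * (-(1/2) * pexp (muP μ) (fun x => pexp (μ i) (fun t =>
            f (Function.update x i t) * (L i (fun y => (f (Function.update x i y))⁻¹)) t))) :=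
          Finset.sum_le_sum fun i _ => hper i
      _ = Cm * (-(1/2) * ∑ i, pexp (muP μ) (fun x => pexp (μ i) (fun t =>
            f (Function.update x i t) * (L i (fun y => (f (Function.update x i y))⁻¹)) t))) := by
          rw [← Finset.mul_sum, ← Finset.mul_sum]
      _ = -(Cm / 2) * dform (muP μ) (tensorL X L) f (fun ω => (f ω)⁻¹) := by
          rw [dform_tensor μ hμ1 L f (fun ω => (f ω)⁻¹)]
          ring
  · by_cases hp1 : p = 1
    · -- the case p = 1 : entropy with log
      subst hp1
      unfold LogSob
      rw [if_neg hp0, if_pos rfl]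
      intro f hf
      have hsub := ent_subadd μ hμpos hμ1 f hf
      have hper : ∀ i : Fin n,
          pexp (muP μ) (fun x => entE (μ i) (fun t => f (Function.update x i t)))
          ≤ Cm * ((1/4) * pexp (muP μ) (fun x => pexp (μ i) (fun t =>
              f (Function.update x i t) * (L i (fun y => Real.log (f (Function.update x i y)))) t))) := by
        intro i
        have hLSi := hLS i
        unfold LogSob at hLSi
        rw [if_neg hp0, if_pos rfl] at hLSi
        have hstep : ∀ x : ∀ j, X j,
            entE (μ i) (fun t => f (Function.update x i t))
            ≤ Cm * ((1/4) * pexp (μ i) (fun t =>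
                f (Function.update x i t) * (L i (fun y => Real.log (f (Function.update x i y)))) t)) := by
          intro x
          have hle := hLSi (fun t => f (Function.update x i t)) (fun t => hf _)
          have h0 : 0 ≤ entE (μ i) (fun t => f (Function.update x i t)) :=
            entE_nonneg (hμpos i) (hμ1 i) _ (fun t => hf _)
          refine bound_bump (hC i) (hCC i) h0 ?_
          refine le_trans hle (le_of_eq ?_)
          unfold dform
          ring
        calc pexp (muP μ) (fun x => entE (μ i) (fun t => f (Function.update x i t)))
            ≤ pexp (muP μ) (fun x => Cm * ((1/4) * pexp (μ i) (fun t =>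
                f (Function.update x i t) * (L i (fun y => Real.log (f (Function.update x i y)))) t))) :=
              pexp_mono hμP hstep
          _ = Cm * ((1/4) * pexp (muP μ) (fun x => pexp (μ i) (fun t =>
                f (Function.update x i t) * (L i (fun y => Real.log (f (Function.update x i y)))) t))) := by
              rw [pexp_const_mul, pexp_const_mul]
      calc entE (muP μ) f
          ≤ ∑ i, pexp (muP μ) (fun x => entE (μ i)
              (fun t => f (Function.update x i t))) := hsub
        _ ≤ ∑ i, Cm * ((1/4) * pexp (muP μ) (fun x => pexp (μ i) (fun t =>
              f (Function.update x i t) * (L i (fun y => Real.log (f (Function.update x i y)))) t))) :=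
            Finset.sum_le_sum fun i _ => hper i
        _ = Cm * ((1/4) * ∑ i, pexp (muP μ) (fun x => pexp (μ i) (fun t =>
              f (Function.update x i t) * (L i (fun y => Real.log (f (Function.update x i y)))) t))) := by
            rw [← Finset.mul_sum, ← Finset.mul_sum]
        _ = Cm / 4 * dform (muP μ) (tensorL X L) f (fun ω => Real.log (f ω)) := by
            rw [dform_tensor μ hμ1 L f (fun ω => Real.log (f ω))]
            ring
    · -- the generic case
      unfold LogSob
      rw [if_neg hp0, if_neg hp1]
      intro f hf
      have hsub := ent_subadd μ hμpos hμ1 (fun x => f x ^ p)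
        (fun x => Real.rpow_pos_of_pos (hf x) p)
      have hper : ∀ i : Fin n,
          pexp (muP μ) (fun x => entE (μ i) (fun t => f (Function.update x i t) ^ p))
          ≤ Cm * ((p ^ 2 / (4 * (p - 1))) * pexp (muP μ) (fun x => pexp (μ i) (fun t =>
              f (Function.update x i t) ^ (p - 1) * (L i (fun y => f (Function.update x i y))) t))) := by
        intro i
        have hLSi := hLS i
        unfold LogSob at hLSi
        rw [if_neg hp0, if_neg hp1] at hLSi
        have hstep : ∀ x : ∀ j, X j,
            entE (μ i) (fun t => f (Function.update x i t) ^ p)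
            ≤ Cm * ((p ^ 2 / (4 * (p - 1))) * pexp (μ i) (fun t =>
                f (Function.update x i t) ^ (p - 1) * (L i (fun y => f (Function.update x i y))) t)) := by
          intro x
          have hle := hLSi (fun t => f (Function.update x i t)) (fun t => hf _)
          have h0 : 0 ≤ entE (μ i) (fun t => f (Function.update x i t) ^ p) :=
            entE_nonneg (hμpos i) (hμ1 i) _
              (fun t => Real.rpow_pos_of_pos (hf _) p)
          refine bound_bump (hC i) (hCC i) h0 ?_
          refine le_trans hle (le_of_eq ?_)
          unfold dform
          ring
        calc pexp (muP μ) (fun x => entE (μ i) (fun t => f (Function.update x i t) ^ p))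
            ≤ pexp (muP μ) (fun x => Cm * ((p ^ 2 / (4 * (p - 1))) * pexp (μ i) (fun t =>
                f (Function.update x i t) ^ (p - 1) * (L i (fun y => f (Function.update x i y))) t))) :=
              pexp_mono hμP hstep
          _ = Cm * ((p ^ 2 / (4 * (p - 1))) * pexp (muP μ) (fun x => pexp (μ i) (fun t =>
                f (Function.update x i t) ^ (p - 1) * (L i (fun y => f (Function.update x i y))) t))) := by
              rw [pexp_const_mul, pexp_const_mul]
      calc entE (muP μ) (fun x => f x ^ p)
          ≤ ∑ i, pexp (muP μ) (fun x => entE (μ i)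
              (fun t => f (Function.update x i t) ^ p)) := hsub
        _ ≤ ∑ i, Cm * ((p ^ 2 / (4 * (p - 1))) * pexp (muP μ) (fun x => pexp (μ i) (fun t =>
              f (Function.update x i t) ^ (p - 1) * (L i (fun y => f (Function.update x i y))) t))) :=
            Finset.sum_le_sum fun i _ => hper i
        _ = Cm * ((p ^ 2 / (4 * (p - 1))) * ∑ i, pexp (muP μ) (fun x => pexp (μ i) (fun t =>
              f (Function.update x i t) ^ (p - 1) * (L i (fun y => f (Function.update x i y))) t))) := by
            rw [← Finset.mul_sum, ← Finset.mul_sum]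
        _ = Cm * p ^ 2 / (4 * (p - 1)) * dform (muP μ) (tensorL X L) (fun ω => f ω ^ (p - 1)) f := by
            rw [dform_tensor μ hμ1 L (fun ω => f ω ^ (p - 1)) f]
            ring

end
end

section
/- Let r ∈ (1,2] and C > 0, and suppose the generator L satisfies the r-logSob inequality with constant C. Let p ≥ q be real numbers such that either r' ≤ q ≤ p (where r' = r/(r−1)) or 1 < q ≤ p ≤ r. Then for every t ≥ (C/4)·log((p−1)/(q−1)) and every f : Ω → ℝ, one has ‖T_t f‖_p ≤ ‖f‖_q. -/
open Real Finset

noncomputable section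

variable {Ω : Type*}

namespace HC
variable [Fintype Ω]

open scoped Classical in
/-- matrix entries of `L` -/
def Km (L : (Ω → ℝ) →ₗ[ℝ] (Ω → ℝ)) (x y : Ω) : ℝ :=
  L (fun z => if z = y then 1 else 0) x

open scoped Classical in
lemma apply_eq_sum (L : (Ω → ℝ) →ₗ[ℝ] (Ω → ℝ)) (f : Ω → ℝ) (x : Ω) :
    L f x = ∑ y, f y * Km L x y := by
  classical
  have hf : f = ∑ y, f y • (fun z => if z = y then (1:ℝ) else 0) := by
    funext z
    simp [Finset.sum_apply, Finset.sum_ite_eq]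
  calc L f x = L (∑ y, f y • (fun z => if z = y then (1:ℝ) else 0)) x := by rw [← hf]
    _ = ∑ y, f y * Km L x y := by
        rw [map_sum]
        simp [Finset.sum_apply, Km]

lemma Km_offdiag_nonpos (μ : Ω → ℝ) (L : (Ω → ℝ) →ₗ[ℝ] (Ω → ℝ)) (hL : IsGen μ L)
    {x y : Ω} (hxy : x ≠ y) : Km L x y ≤ 0 := by
  classical
  have h := hL.2.2.2 (fun z => if z = y then (-1:ℝ) else 0) x (by
    intro z
    rw [if_neg hxy]
    split_ifs <;> norm_num)
  have he : (fun z => if z = y then (-1:ℝ) else 0) = (-1 : ℝ) • (fun z => if z = y then (1:ℝ) else 0) := by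
    funext z; by_cases h : z = y <;> simp [h]
  rw [he, map_smul] at h
  simp only [Pi.smul_apply, smul_eq_mul] at h
  have : -(Km L x y) ≥ 0 := by simpa [Km] using h
  linarith

lemma Km_symm (μ : Ω → ℝ) (L : (Ω → ℝ) →ₗ[ℝ] (Ω → ℝ)) (hL : IsGen μ L) (x y : Ω) :
    μ x * Km L x y = μ y * Km L y x := by
  classical
  have h := hL.2.1 (fun z => if z = x then (1:ℝ) else 0) (fun z => if z = y then (1:ℝ) else 0)
  simp only [pexp] at h
  rw [Finset.sum_eq_single x, Finset.sum_eq_single y] at h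
  · simpa [Km] using h
  · intro b _ hb; rw [if_neg hb]; ring
  · simp
  · intro b _ hb; rw [if_neg hb]; ring
  · simp

lemma Km_rowsum (μ : Ω → ℝ) (L : (Ω → ℝ) →ₗ[ℝ] (Ω → ℝ)) (hL : IsGen μ L) (x : Ω) :
    ∑ y, Km L x y = 0 := by
  have := apply_eq_sum L (fun _ => 1) x
  rw [hL.1] at this
  simpa using this.symm

/-- Dirichlet form as a sum over pairs. -/
lemma dform_sum (μ : Ω → ℝ) (L : (Ω → ℝ) →ₗ[ℝ] (Ω → ℝ)) (hL : IsGen μ L) (f g : Ω → ℝ) :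
    dform μ L f g
      = (1/2) * ∑ x, ∑ y, (-(μ x * Km L x y)) * ((f x - f y) * (g x - g y)) := by
  classical
  have hS : dform μ L f g = ∑ x, ∑ y, μ x * Km L x y * (f x * g y) := by
    simp only [dform, pexp]
    refine Finset.sum_congr rfl fun x _ => ?_
    rw [apply_eq_sum L g x, Finset.mul_sum, Finset.mul_sum]
    exact Finset.sum_congr rfl fun y _ => by ring
  have h1 : ∑ x, ∑ y, μ x * Km L x y * (f x * g x) = 0 := by
    refine Finset.sum_eq_zero fun x _ => ?_
    rw [← Finset.sum_mul]
    rw [show ∑ y, μ x * Km L x y = μ x * ∑ y, Km L x y by rw [Finset.mul_sum]]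
    rw [Km_rowsum μ L hL]; ring
  have h2 : ∑ x, ∑ y, μ x * Km L x y * (f y * g y) = 0 := by
    have : ∑ x, ∑ y, μ x * Km L x y * (f y * g y)
        = ∑ y, ∑ x, μ y * Km L y x * (f y * g y) := by
      rw [Finset.sum_comm]
      exact Finset.sum_congr rfl fun y _ => Finset.sum_congr rfl fun x _ => by
        rw [Km_symm μ L hL x y]
    rw [this]
    refine Finset.sum_eq_zero fun y _ => ?_
    rw [← Finset.sum_mul, show ∑ x, μ y * Km L y x = μ y * ∑ x, Km L y x by rw [Finset.mul_sum],
      Km_rowsum μ L hL]; ring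
  have h3 : ∑ x, ∑ y, μ x * Km L x y * (f y * g x)
      = ∑ x, ∑ y, μ x * Km L x y * (f x * g y) := by
    rw [Finset.sum_comm]
    exact Finset.sum_congr rfl fun y _ => Finset.sum_congr rfl fun x _ => by
      rw [Km_symm μ L hL x y]
  have expand : ∑ x, ∑ y, (-(μ x * Km L x y)) * ((f x - f y) * (g x - g y))
      = ((∑ x, ∑ y, μ x * Km L x y * (f x * g y))
          + ∑ x, ∑ y, μ x * Km L x y * (f y * g x))
        - ((∑ x, ∑ y, μ x * Km L x y * (f x * g x))
          + ∑ x, ∑ y, μ x * Km L x y * (f y * g y)) := by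
    simp only [← Finset.sum_add_distrib, ← Finset.sum_sub_distrib]
    exact Finset.sum_congr rfl fun x _ => Finset.sum_congr rfl fun y _ => by ring
  rw [hS, expand, h1, h2, h3]
  ring

lemma sinh_ineq {y : ℝ} (hy : 0 ≤ y) : y * Real.exp (y/2) ≤ Real.exp y - 1 := by
  have hs : y/2 ≤ Real.sinh (y/2) := Real.self_le_sinh_iff.2 (by linarith)
  rw [Real.sinh_eq] at hs
  have h1 : Real.exp (y/2) * Real.exp (y/2) = Real.exp y := by rw [← Real.exp_add]; ring_nf
  have h2 : Real.exp (y/2) * Real.exp (-(y/2)) = 1 := by rw [← Real.exp_add]; simp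
  nlinarith [hs, Real.exp_pos (y/2)]

lemma sq_ineq {y : ℝ} (hy : 0 ≤ y) : y^2 * Real.exp y ≤ (Real.exp y - 1)^2 := by
  have h := sinh_ineq hy
  have h1 : 0 ≤ y * Real.exp (y/2) := by positivity
  have h3 := mul_self_le_mul_self h1 h
  have h4 : Real.exp (y/2) * Real.exp (y/2) = Real.exp y := by rw [← Real.exp_add]; ring_nf
  nlinarith [h3, h4]

/-- `log ((exp (c*x) - 1) / c)` is convex in `c` on `(0, ∞)`, for `x > 0`. -/
lemma logh_convex {x : ℝ} (hx : 0 < x) :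
    ConvexOn ℝ (Set.Ioi (0:ℝ)) (fun c => Real.log (Real.exp (c*x) - 1) - Real.log c) := by
  have hpos : ∀ c : ℝ, 0 < c → 0 < Real.exp (c*x) - 1 := fun c hc => by
    have : (0:ℝ) < c * x := by positivity
    have := Real.exp_lt_exp.2 this
    simp only [Real.exp_zero] at this; linarith
  set k1 : ℝ → ℝ := fun c => x * Real.exp (c*x) / (Real.exp (c*x) - 1) - 1/c with hk1
  have hd1 : ∀ c ∈ Set.Ioi (0:ℝ), HasDerivAt (fun c => Real.log (Real.exp (c*x) - 1) - Real.log c)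
      (k1 c) c := by
    intro c hc
    have hc0 : (0:ℝ) < c := hc
    have h1 : HasDerivAt (fun c : ℝ => Real.exp (c*x) - 1) (x * Real.exp (c*x)) c := by
      have : HasDerivAt (fun c : ℝ => c * x) x c := by
        simpa using (hasDerivAt_id c).mul_const x
      simpa [mul_comm] using (this.exp.sub_const 1)
    have h2 := (h1.log (ne_of_gt (hpos c hc0)))
    have h3 := (Real.hasDerivAt_log (ne_of_gt hc0))
    simpa [hk1, div_eq_mul_inv, one_div] using h2.fun_sub h3
  have hderiv_eq : ∀ c ∈ Set.Ioi (0:ℝ),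
      deriv (fun c => Real.log (Real.exp (c*x) - 1) - Real.log c) c = k1 c :=
    fun c hc => (hd1 c hc).deriv
  refine convexOn_of_deriv2_nonneg (convex_Ioi 0) ?_ ?_ ?_ ?_
  · intro c hc
    exact ((hd1 c hc).continuousAt).continuousWithinAt
  · rw [interior_Ioi]; intro c hc
    exact ((hd1 c hc).differentiableAt).differentiableWithinAt
  · rw [interior_Ioi]
    intro c hc
    have hc0 : (0:ℝ) < c := hc
    have hk1d : DifferentiableAt ℝ k1 c := by
      have h1 : DifferentiableAt ℝ (fun c : ℝ => Real.exp (c*x)) c :=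
        ((differentiableAt_id.mul_const x).exp)
      have h2 : DifferentiableAt ℝ (fun c : ℝ => Real.exp (c*x) - 1) c := h1.sub_const 1
      exact (((h1.const_mul x).div h2 (ne_of_gt (hpos c hc0)))).sub
        ((differentiableAt_const 1).div differentiableAt_id (ne_of_gt hc0))
    have heq : deriv (fun c => Real.log (Real.exp (c*x) - 1) - Real.log c) =ᶠ[nhds c] k1 :=
      Filter.eventuallyEq_of_mem (Ioi_mem_nhds hc0) hderiv_eq
    exact ((heq.differentiableAt_iff).2 hk1d).differentiableWithinAt
  · rw [interior_Ioi]
    intro c hc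
    have hc0 : (0:ℝ) < c := hc
    have heq : deriv (fun c => Real.log (Real.exp (c*x) - 1) - Real.log c) =ᶠ[nhds c] k1 :=
      Filter.eventuallyEq_of_mem (Ioi_mem_nhds hc0) hderiv_eq
    have h2 : deriv^[2] (fun c => Real.log (Real.exp (c*x) - 1) - Real.log c) c = deriv k1 c := by
      simp only [Function.iterate_succ, Function.iterate_zero, Function.comp_apply, id_eq]
      exact Filter.EventuallyEq.deriv_eq heq
    rw [h2]
    have hE : (0:ℝ) < Real.exp (c*x) - 1 := hpos c hc0
    have h1 : HasDerivAt (fun c : ℝ => Real.exp (c*x)) (x * Real.exp (c*x)) c := by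
      have : HasDerivAt (fun c : ℝ => c * x) x c := by
        simpa using (hasDerivAt_id c).mul_const x
      simpa [mul_comm] using this.exp
    have hnum : HasDerivAt (fun c : ℝ => x * Real.exp (c*x)) (x * (x * Real.exp (c*x))) c :=
      h1.const_mul x
    have hden : HasDerivAt (fun c : ℝ => Real.exp (c*x) - 1) (x * Real.exp (c*x)) c :=
      h1.sub_const 1
    have hq : HasDerivAt (fun c : ℝ => x * Real.exp (c*x) / (Real.exp (c*x) - 1))
        ((x * (x * Real.exp (c*x)) * (Real.exp (c*x) - 1)
          - x * Real.exp (c*x) * (x * Real.exp (c*x))) / (Real.exp (c*x) - 1)^2) c :=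
      hnum.div hden (ne_of_gt hE)
    have hinv : HasDerivAt (fun c : ℝ => 1/c) (-(1/c^2)) c := by
      simpa [one_div] using (hasDerivAt_inv (ne_of_gt hc0))
    have hk1' : HasDerivAt k1
        ((x * (x * Real.exp (c*x)) * (Real.exp (c*x) - 1)
          - x * Real.exp (c*x) * (x * Real.exp (c*x))) / (Real.exp (c*x) - 1)^2
          + 1/c^2) c := by
      have := hq.fun_sub hinv
      simpa [hk1, sub_eq_add_neg] using this
    rw [hk1'.deriv]
    have key := sq_ineq (le_of_lt (mul_pos hc0 hx))
    have hrw : (x * (x * Real.exp (c*x)) * (Real.exp (c*x) - 1)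
          - x * Real.exp (c*x) * (x * Real.exp (c*x))) / (Real.exp (c*x) - 1)^2
          + 1/c^2
        = ((Real.exp (c*x) - 1)^2 - (c*x)^2 * Real.exp (c*x)) / ((Real.exp (c*x) - 1)^2 * c^2) := by
      rw [div_add_div _ _ (pow_ne_zero 2 hE.ne') (pow_ne_zero 2 hc0.ne'),
        div_eq_div_iff (mul_ne_zero (pow_ne_zero 2 hE.ne') (pow_ne_zero 2 hc0.ne'))
          (mul_ne_zero (pow_ne_zero 2 hE.ne') (pow_ne_zero 2 hc0.ne'))]
      ring
    rw [hrw]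
    apply div_nonneg (by linarith) (by positivity)


/-- central pointwise lemma, `w > 1` case -/
lemma prod_lemma_gt {w a b a' b' : ℝ} (hw : 1 < w) (hb' : 0 < b')
    (h1 : b' ≤ b) (h2 : b ≤ a) (h3 : a ≤ a') (hsum : a + b = a' + b') :
    (w^a - 1)*(w^b - 1)/(a*b) ≤ (w^a' - 1)*(w^b' - 1)/(a'*b') := by
  have hb : 0 < b := lt_of_lt_of_le hb' h1
  have ha : 0 < a := lt_of_lt_of_le hb h2
  have ha' : 0 < a' := lt_of_lt_of_le ha h3
  have hx : 0 < Real.log w := Real.log_pos hw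
  set k : ℝ → ℝ := fun c => Real.log (Real.exp (c * Real.log w) - 1) - Real.log c with hk
  have hconv := logh_convex hx
  have hkk : k a + k b ≤ k a' + k b' := by
    rcases eq_or_lt_of_le (le_trans h1 (le_trans h2 h3) : b' ≤ a') with he | hlt
    · have haa : a = a' := by linarith
      have hbb : b = b' := by linarith
      rw [haa, hbb]
    · set lam := (a - b') / (a' - b') with hlam
      have hd : 0 < a' - b' := by linarith
      have hl0 : 0 ≤ lam := div_nonneg (by linarith) (le_of_lt hd)
      have hl1 : lam ≤ 1 := by
        rw [hlam, div_le_one hd]; linarith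
      have hmem : ∀ c : ℝ, 0 < c → c ∈ Set.Ioi (0:ℝ) := fun c hc => hc
      have e1 : lam * a' + (1 - lam) * b' = a := by
        have hl : lam * (a' - b') = a - b' := by rw [hlam]; exact div_mul_cancel₀ _ (ne_of_gt hd)
        linear_combination hl
      have e2 : (1 - lam) * a' + lam * b' = b := by
        have : (1-lam) * (a'-b') = a' - a := by
          rw [hlam]; field_simp; ring
        nlinarith [this]
      have hl0' : (0:ℝ) ≤ 1 - lam := by linarith
      have hs1 : lam + (1 - lam) = 1 := by ring
      have hs2 : (1 - lam) + lam = 1 := by ring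
      have c1 := hconv.2 (hmem a' ha') (hmem b' hb') hl0 hl0' hs1
      have c2 := hconv.2 (hmem a' ha') (hmem b' hb') hl0' hl0 hs2
      simp only [smul_eq_mul] at c1 c2
      rw [e1] at c1
      rw [e2] at c2
      have : k a + k b ≤ (lam * k a' + (1-lam) * k b') + ((1-lam) * k a' + lam * k b') :=
        add_le_add c1 c2
      calc k a + k b ≤ _ := this
        _ = k a' + k b' := by ring
  -- convert to products
  have hh : ∀ c : ℝ, 0 < c → Real.exp (k c) = (w^c - 1)/c := by
    intro c hc
    have hwc : w^c = Real.exp (c * Real.log w) := by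
      rw [Real.rpow_def_of_pos (by linarith : (0:ℝ) < w), mul_comm]
    have hpos : 0 < Real.exp (c * Real.log w) - 1 := by
      have : (0:ℝ) < c * Real.log w := by positivity
      have := Real.exp_lt_exp.2 this
      simp only [Real.exp_zero] at this; linarith
    rw [hk]
    rw [Real.exp_sub, Real.exp_log hpos, Real.exp_log hc, hwc]
  have lhs_eq : Real.exp (k a + k b) = (w^a - 1)*(w^b - 1)/(a*b) := by
    rw [Real.exp_add, hh a ha, hh b hb]
    rw [div_mul_div_comm]
  have rhs_eq : Real.exp (k a' + k b') = (w^a' - 1)*(w^b' - 1)/(a'*b') := by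
    rw [Real.exp_add, hh a' ha', hh b' hb']
    rw [div_mul_div_comm]
  calc (w^a - 1)*(w^b - 1)/(a*b) = Real.exp (k a + k b) := lhs_eq.symm
    _ ≤ Real.exp (k a' + k b') := Real.exp_le_exp.2 hkk
    _ = (w^a' - 1)*(w^b' - 1)/(a'*b') := rhs_eq

/-- central pointwise lemma, general positive `u, v` -/
lemma prod_lemma {u v a b a' b' : ℝ} (hu : 0 < u) (hv : 0 < v) (hb' : 0 < b')
    (h1 : b' ≤ b) (h2 : b ≤ a) (h3 : a ≤ a') (hsum : a + b = a' + b') :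
    (u^a - v^a)*(u^b - v^b)/(a*b) ≤ (u^a' - v^a')*(u^b' - v^b')/(a'*b') := by
  have hb : 0 < b := lt_of_lt_of_le hb' h1
  have ha : 0 < a := lt_of_lt_of_le hb h2
  have ha' : 0 < a' := lt_of_lt_of_le ha h3
  have key : ∀ u v : ℝ, 0 < u → 0 < v → v < u →
      (u^a - v^a)*(u^b - v^b)/(a*b) ≤ (u^a' - v^a')*(u^b' - v^b')/(a'*b') := by
    intro u v hu hv hlt
    have hw : 1 < u/v := (one_lt_div hv).2 hlt
    have hG := prod_lemma_gt hw hb' h1 h2 h3 hsum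
    have scale : ∀ c : ℝ, u^c - v^c = v^c * ((u/v)^c - 1) := by
      intro c
      rw [Real.div_rpow (le_of_lt hu) (le_of_lt hv)]
      field_simp
    have hvab : (0:ℝ) < v^a * v^b := by positivity
    have hvab' : v^a * v^b = v^a' * v^b' := by
      rw [← Real.rpow_add hv, ← Real.rpow_add hv, hsum]
    have := mul_le_mul_of_nonneg_left hG (le_of_lt hvab)
    calc (u^a - v^a)*(u^b - v^b)/(a*b)
        = v^a * v^b * (((u/v)^a - 1)*((u/v)^b - 1)/(a*b)) := by
          rw [scale a, scale b]; ring
      _ ≤ v^a * v^b * (((u/v)^a' - 1)*((u/v)^b' - 1)/(a'*b')) := this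
      _ = v^a' * v^b' * (((u/v)^a' - 1)*((u/v)^b' - 1)/(a'*b')) := by rw [hvab']
      _ = (u^a' - v^a')*(u^b' - v^b')/(a'*b') := by
          rw [scale a', scale b']; ring
  rcases lt_trichotomy v u with hlt | heq | hgt
  · exact key u v hu hv hlt
  · rw [heq]
    simp
  · have h := key v u hv hu hgt
    calc (u^a - v^a)*(u^b - v^b)/(a*b) = (v^a - u^a)*(v^b - u^b)/(a*b) := by ring
      _ ≤ (v^a' - u^a')*(v^b' - u^b')/(a'*b') := h
      _ = (u^a' - v^a')*(u^b' - v^b')/(a'*b') := by ring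

/-- Dirichlet form comparison (generalized Stroock–Varopoulos). -/
lemma dform_comp (μ : Ω → ℝ) (hμpos : ∀ ω, 0 < μ ω) (L : (Ω → ℝ) →ₗ[ℝ] (Ω → ℝ))
    (hL : IsGen μ L) (f : Ω → ℝ) (hf : ∀ ω, 0 < f ω)
    {a b a' b' : ℝ} (hb' : 0 < b') (h1 : b' ≤ b) (h2 : b ≤ a) (h3 : a ≤ a')
    (hsum : a + b = a' + b') :
    (1/(a*b)) * dform μ L (fun ω => f ω ^ a) (fun ω => f ω ^ b)
      ≤ (1/(a'*b')) * dform μ L (fun ω => f ω ^ a') (fun ω => f ω ^ b') := by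
  rw [dform_sum μ L hL, dform_sum μ L hL]
  have e : ∀ (c : ℝ) (t : Ω → Ω → ℝ), (1/c) * ((1/2) * ∑ x, ∑ y, t x y)
      = (1/2) * ∑ x, ∑ y, (1/c) * t x y := by
    intro c t
    simp only [Finset.mul_sum]
    exact Finset.sum_congr rfl fun x _ => Finset.sum_congr rfl fun y _ => by ring
  rw [e, e]
  have hmain : ∀ x y : Ω,
      (1/(a*b)) * ((-(μ x * Km L x y)) * ((f x ^ a - f y ^ a) * (f x ^ b - f y ^ b)))
      ≤ (1/(a'*b')) * ((-(μ x * Km L x y)) * ((f x ^ a' - f y ^ a') * (f x ^ b' - f y ^ b'))) := by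
    intro x y
    rcases eq_or_ne x y with rfl | hxy
    · simp
    · have hc : 0 ≤ -(μ x * Km L x y) := by
        have := Km_offdiag_nonpos μ L hL hxy
        have := (hμpos x)
        nlinarith
      have hp := prod_lemma (hf x) (hf y) hb' h1 h2 h3 hsum
      have := mul_le_mul_of_nonneg_left hp hc
      calc (1/(a*b)) * ((-(μ x * Km L x y)) * ((f x ^ a - f y ^ a) * (f x ^ b - f y ^ b)))
          = (-(μ x * Km L x y)) * ((f x ^ a - f y ^ a) * (f x ^ b - f y ^ b)/(a*b)) := by ring
        _ ≤ (-(μ x * Km L x y)) * ((f x ^ a' - f y ^ a') * (f x ^ b' - f y ^ b')/(a'*b')) := this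
        _ = (1/(a'*b')) * ((-(μ x * Km L x y)) * ((f x ^ a' - f y ^ a') * (f x ^ b' - f y ^ b'))) := by
            ring
  have := Finset.sum_le_sum (fun x (_ : x ∈ Finset.univ) =>
    Finset.sum_le_sum (fun y (_ : y ∈ Finset.univ) => hmain x y))
  linarith

/-- nonnegativity of `𝓔(f^a, f^b)` for positive `f` and positive exponents. -/
lemma dform_pow_nonneg (μ : Ω → ℝ) (hμpos : ∀ ω, 0 < μ ω) (L : (Ω → ℝ) →ₗ[ℝ] (Ω → ℝ))
    (hL : IsGen μ L) (f : Ω → ℝ) (hf : ∀ ω, 0 < f ω)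
    {a b : ℝ} (ha : 0 < a) (hb : 0 < b) :
    0 ≤ dform μ L (fun ω => f ω ^ a) (fun ω => f ω ^ b) := by
  rw [dform_sum μ L hL]
  apply mul_nonneg (by norm_num)
  apply Finset.sum_nonneg
  intro x _
  apply Finset.sum_nonneg
  intro y _
  rcases eq_or_ne x y with rfl | hxy
  · simp
  · have hc : 0 ≤ -(μ x * Km L x y) := by
      have := Km_offdiag_nonpos μ L hL hxy
      have := (hμpos x)
      nlinarith
    apply mul_nonneg hc
    rcases le_total (f x) (f y) with h | h
    · have e1 : f x ^ a ≤ f y ^ a := Real.rpow_le_rpow (le_of_lt (hf x)) h (by positivity)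
      have e2 : f x ^ b ≤ f y ^ b := Real.rpow_le_rpow (le_of_lt (hf x)) h (by positivity)
      nlinarith
    · have e1 : f y ^ a ≤ f x ^ a := Real.rpow_le_rpow (le_of_lt (hf y)) h (by positivity)
      have e2 : f y ^ b ≤ f x ^ b := Real.rpow_le_rpow (le_of_lt (hf y)) h (by positivity)
      nlinarith

lemma dform_symm (μ : Ω → ℝ) (L : (Ω → ℝ) →ₗ[ℝ] (Ω → ℝ)) (hL : IsGen μ L) (f g : Ω → ℝ) :
    dform μ L f g = dform μ L g f := hL.2.1 f g

/-- the expanded form of the `s`-logSob inequality -/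
def LS (μ : Ω → ℝ) (L : (Ω → ℝ) →ₗ[ℝ] (Ω → ℝ)) (s C : ℝ) : Prop :=
  ∀ f : Ω → ℝ, (∀ ω, 0 < f ω) →
    entE μ (fun ω => f ω ^ s) ≤ C * s ^ 2 / (4 * (s - 1)) * dform μ L (fun ω => f ω ^ (s - 1)) f

lemma ls_mono (μ : Ω → ℝ) (hμpos : ∀ ω, 0 < μ ω) (L : (Ω → ℝ) →ₗ[ℝ] (Ω → ℝ))
    (hL : IsGen μ L) (r C : ℝ) (hr1 : 1 < r) (hr2 : r ≤ 2) (hC : 0 < C)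
    (hLS : LS μ L r C) (s : ℝ) (hs1 : 1 < s) (hs2 : s ≤ r) : LS μ L s C := by
  intro f hf
  have hr0 : (0:ℝ) < r := by linarith
  have hs0 : (0:ℝ) < s := by linarith
  set g : Ω → ℝ := fun ω => f ω ^ (s/r) with hg
  have hgpos : ∀ ω, 0 < g ω := fun ω => Real.rpow_pos_of_pos (hf ω) _
  have h1 := hLS g hgpos
  have e1 : (fun ω => g ω ^ r) = fun ω => f ω ^ s := by
    funext ω
    rw [hg, ← Real.rpow_mul (le_of_lt (hf ω)), div_mul_cancel₀ _ (ne_of_gt hr0)]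
  have e2 : (fun ω => g ω ^ (r-1)) = fun ω => f ω ^ (s*(r-1)/r) := by
    funext ω
    rw [hg, ← Real.rpow_mul (le_of_lt (hf ω))]
    ring_nf
  rw [e1, e2] at h1
  -- comparison step
  have hcomp := dform_comp μ hμpos L hL f hf
    (a := s/r) (b := s*(r-1)/r) (a' := 1) (b' := s-1)
    (by linarith)
    (by rw [le_div_iff₀ hr0]; nlinarith)
    (by rw [div_le_div_iff₀ hr0 hr0]; nlinarith [mul_pos hs0 hr0])
    (by rw [div_le_one hr0]; linarith)
    (by field_simp; ring)
  -- translate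
  have hfe : (fun ω => f ω ^ (1:ℝ)) = f := by funext ω; rw [Real.rpow_one]
  rw [hfe] at hcomp
  have hd1 : dform μ L (fun ω => f ω ^ (s/r)) (fun ω => f ω ^ (s*(r-1)/r))
      = dform μ L (fun ω => f ω ^ (s*(r-1)/r)) (fun ω => f ω ^ (s/r)) :=
    dform_symm μ L hL _ _
  have hd2 : dform μ L f (fun ω => f ω ^ (s-1))
      = dform μ L (fun ω => f ω ^ (s-1)) f := dform_symm μ L hL _ _
  rw [hd1, hd2] at hcomp
  have hab : (s/r) * (s*(r-1)/r) = s^2*(r-1)/r^2 := by ring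
  -- coefficient identities
  have hcoef : C * r ^ 2 / (4 * (r - 1)) = (C * s^2/4) * (1/((s/r) * (s*(r-1)/r))) := by
    rw [hab]
    have hs' : s ≠ 0 := by linarith
    have h4 : r - 1 ≠ 0 := by linarith
    field_simp
  have hcoef2 : C * s ^ 2 / (4 * (s - 1)) = (C * s^2/4) * (1/(1*(s-1))) := by
    field_simp
  have hCs : (0:ℝ) ≤ C * s^2/4 := by positivity
  calc entE μ (fun ω => f ω ^ s)
      ≤ C * r ^ 2 / (4 * (r - 1)) * dform μ L (fun ω => f ω ^ (s*(r-1)/r)) (fun ω => f ω ^ (s/r)) := h1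
    _ = (C * s^2/4) * ((1/((s/r) * (s*(r-1)/r))) * dform μ L (fun ω => f ω ^ (s*(r-1)/r)) (fun ω => f ω ^ (s/r))) := by
        rw [hcoef]; ring
    _ ≤ (C * s^2/4) * ((1/(1*(s-1))) * dform μ L (fun ω => f ω ^ (s-1)) f) := by
        exact mul_le_mul_of_nonneg_left hcomp hCs
    _ = C * s ^ 2 / (4 * (s - 1)) * dform μ L (fun ω => f ω ^ (s-1)) f := by
        rw [hcoef2]; ring

lemma ls_dual (μ : Ω → ℝ) (L : (Ω → ℝ) →ₗ[ℝ] (Ω → ℝ))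
    (hL : IsGen μ L) (s C : ℝ) (hs1 : 1 < s)
    (hLS : LS μ L (s/(s-1)) C) : LS μ L s C := by
  intro f hf
  have hs0 : (0:ℝ) < s - 1 := by linarith
  set s' : ℝ := s/(s-1) with hs'
  have hs'1 : 1 < s' := by
    rw [hs', lt_div_iff₀ hs0]; linarith
  set g : Ω → ℝ := fun ω => f ω ^ (s-1) with hg
  have hgpos : ∀ ω, 0 < g ω := fun ω => Real.rpow_pos_of_pos (hf ω) _
  have h1 := hLS g hgpos
  have e1 : (fun ω => g ω ^ s') = fun ω => f ω ^ s := by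
    funext ω
    rw [hg, ← Real.rpow_mul (le_of_lt (hf ω)), hs', mul_div_cancel₀ _ (ne_of_gt hs0)]
  have e2 : (fun ω => g ω ^ (s'-1)) = f := by
    funext ω
    rw [hg, ← Real.rpow_mul (le_of_lt (hf ω))]
    have : (s-1) * (s' - 1) = 1 := by
      rw [hs']; field_simp; ring
    rw [this, Real.rpow_one]
  rw [e1, e2] at h1
  have hcoef : C * s' ^ 2 / (4 * (s' - 1)) = C * s ^ 2 / (4 * (s - 1)) := by
    rw [hs']; field_simp; ring
  rw [hcoef] at h1
  rw [dform_symm μ L hL f g] at h1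
  exact h1

section HeatSec
variable (L : (Ω → ℝ) →ₗ[ℝ] (Ω → ℝ))

/-- evaluation of the exponential series -/
lemma exp_apply_eq_tsum (B : (Ω → ℝ) →L[ℝ] (Ω → ℝ)) (f : Ω → ℝ) (ω : Ω) :
    NormedSpace.exp B f ω = ∑' n : ℕ, ((n.factorial :ℝ)⁻¹) * ((B^n) f ω) := by
  have h : NormedSpace.exp B = ∑' n : ℕ, ((n.factorial:ℝ)⁻¹) • B^n := by
    rw [NormedSpace.exp_eq_tsum ℝ]
  rw [h]
  set Φ : ((Ω → ℝ) →L[ℝ] (Ω → ℝ)) →L[ℝ] ℝ :=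
    (ContinuousLinearMap.proj (R := ℝ) (φ := fun _ : Ω => ℝ) ω).comp
      (ContinuousLinearMap.apply ℝ (Ω → ℝ) f) with hΦ
  have happ : ∀ T : (Ω → ℝ) →L[ℝ] (Ω → ℝ), Φ T = T f ω := fun T => rfl
  have := Φ.map_tsum (NormedSpace.expSeries_summable' (𝕂 := ℝ) B)
  calc (∑' n : ℕ, ((n.factorial:ℝ)⁻¹) • B^n) f ω
      = Φ (∑' n : ℕ, ((n.factorial:ℝ)⁻¹) • B^n) := (happ _).symm
    _ = ∑' n : ℕ, Φ (((n.factorial:ℝ)⁻¹) • B^n) := this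
    _ = ∑' n : ℕ, ((n.factorial:ℝ)⁻¹) * ((B^n) f ω) := by
        exact tsum_congr fun n => by rw [map_smul]; rfl

lemma acl_apply (f : Ω → ℝ) : (LinearMap.toContinuousLinearMap L) f = L f := by
  rw [LinearMap.coe_toContinuousLinearMap']

lemma heat_nonneg (μ : Ω → ℝ) (hL : IsGen μ L) {t : ℝ} (ht : 0 ≤ t) {f : Ω → ℝ}
    (hf : ∀ ω, 0 ≤ f ω) : ∀ ω, 0 ≤ heat L t f ω := by
  intro ω
  have hne : Nonempty Ω := ⟨ω⟩
  have hune : (Finset.univ : Finset Ω).Nonempty := Finset.univ_nonempty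
  set c : ℝ := max 0 (Finset.univ.sup' hune (fun x => Km L x x)) with hc
  have hdom : ∀ (g : Ω → ℝ), (∀ y, 0 ≤ g y) → ∀ x, L g x ≤ c * g x := by
    intro g hg x
    classical
    rw [apply_eq_sum L g x]
    rw [← Finset.add_sum_erase _ _ (Finset.mem_univ x)]
    have h1 : ∑ y ∈ Finset.univ.erase x, g y * Km L x y ≤ 0 := by
      apply Finset.sum_nonpos
      intro y hy
      have hyx : x ≠ y := fun h => (Finset.mem_erase.1 hy).1 h.symm
      exact mul_nonpos_of_nonneg_of_nonpos (hg y) (Km_offdiag_nonpos μ L hL hyx)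
    have h2 : g x * Km L x x ≤ g x * c := by
      apply mul_le_mul_of_nonneg_left _ (hg x)
      exact le_max_of_le_right (Finset.le_sup' (f := fun z => Km L z z) (Finset.mem_univ x))
    nlinarith
  set A := LinearMap.toContinuousLinearMap L with hA
  set B : (Ω → ℝ) →L[ℝ] (Ω → ℝ) := c • (1 : (Ω → ℝ) →L[ℝ] (Ω → ℝ)) - A with hB
  have hBpos : ∀ (g : Ω → ℝ), (∀ y, 0 ≤ g y) → ∀ x, 0 ≤ B g x := by
    intro g hg x
    have : B g x = c * g x - L g x := by
      rw [hB]
      simp only [ContinuousLinearMap.coe_sub', Pi.sub_apply, ContinuousLinearMap.coe_smul',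
        Pi.smul_apply, ContinuousLinearMap.one_apply, smul_eq_mul, hA, acl_apply]
    rw [this]
    have := hdom g hg x
    linarith
  have hpow : ∀ n : ℕ, ∀ (g : Ω → ℝ), (∀ y, 0 ≤ g y) → ∀ x, 0 ≤ ((t • B)^n) g x := by
    intro n
    induction n with
    | zero => intro g hg x; simpa using hg x
    | succ m ih =>
        intro g hg x
        rw [pow_succ, ContinuousLinearMap.mul_apply]
        have h1 : (t • B) g = t • (B g) := by simp
        have h2 : ∀ y, 0 ≤ ((t • B) g) y := by
          intro y; rw [h1]
          simp only [Pi.smul_apply, smul_eq_mul]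
          exact mul_nonneg ht (hBpos g hg y)
        exact ih ((t • B) g) h2 x
  have decomp : (-t) • A = t • B + (-(t*c)) • (1 : (Ω → ℝ) →L[ℝ] (Ω → ℝ)) := by
    rw [hB]
    module
  have hcomm : Commute (t • B) ((-(t*c)) • (1 : (Ω → ℝ) →L[ℝ] (Ω → ℝ))) := by
    rw [← Algebra.algebraMap_eq_smul_one]
    exact Algebra.commute_algebraMap_right _ _
  have hsplit : NormedSpace.exp ((-t) • A)
      = NormedSpace.exp (t • B) * NormedSpace.exp ((-(t*c)) • (1 : (Ω → ℝ) →L[ℝ] (Ω → ℝ))) := by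
    let +nondep : NormedAlgebra ℚ ((Ω → ℝ) →L[ℝ] (Ω → ℝ)) := .restrictScalars ℚ ℝ _
    rw [decomp, NormedSpace.exp_add_of_commute hcomm]
  have hexp1 : NormedSpace.exp ((-(t*c)) • (1 : (Ω → ℝ) →L[ℝ] (Ω → ℝ)))
      = Real.exp (-(t*c)) • (1 : (Ω → ℝ) →L[ℝ] (Ω → ℝ)) := by
    rw [← Algebra.algebraMap_eq_smul_one, ← Algebra.algebraMap_eq_smul_one,
      ← NormedSpace.algebraMap_exp_comm, Real.exp_eq_exp_ℝ]
  have : heat L t f ω = Real.exp (-(t*c)) * (NormedSpace.exp (t • B) f ω) := by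
    show (NormedSpace.exp ((-t) • A)) f ω = _
    rw [hsplit, hexp1]
    simp only [ContinuousLinearMap.mul_apply, ContinuousLinearMap.coe_smul',
      Pi.smul_apply, ContinuousLinearMap.one_apply, smul_eq_mul]
    rw [map_smul]
    simp
  rw [this]
  apply mul_nonneg (le_of_lt (Real.exp_pos _))
  rw [exp_apply_eq_tsum]
  apply tsum_nonneg
  intro n
  apply mul_nonneg (by positivity)
  exact hpow n f hf ω

lemma heat_one (hL : L (fun _ => 1) = 0) (t : ℝ) :
    heat L t (fun _ => 1) = fun _ => 1 := by
  funext ω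
  show (NormedSpace.exp ((-t) • LinearMap.toContinuousLinearMap L)) (fun _ => 1) ω = 1
  rw [exp_apply_eq_tsum]
  have hzero : ∀ n : ℕ, (((-t) • LinearMap.toContinuousLinearMap L)^(n+1)) (fun _ => 1) = 0 := by
    intro n
    rw [pow_succ]
    have h1 : ((-t) • LinearMap.toContinuousLinearMap L) (fun _ => 1) = 0 := by
      simp only [ContinuousLinearMap.coe_smul', Pi.smul_apply, acl_apply]
      rw [hL]
      simp
    rw [ContinuousLinearMap.mul_apply, h1, map_zero]

  rw [tsum_eq_single 0]
  · simp
  · intro n hn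
    obtain ⟨m, rfl⟩ := Nat.exists_eq_succ_of_ne_zero hn
    rw [hzero m]
    simp

lemma heat_sub (t : ℝ) (f g : Ω → ℝ) : heat L t (f - g) = heat L t f - heat L t g :=
  map_sub (NormedSpace.exp ((-t) • LinearMap.toContinuousLinearMap L)) f g

lemma heat_add_fun (t : ℝ) (f g : Ω → ℝ) : heat L t (f + g) = heat L t f + heat L t g :=
  map_add (NormedSpace.exp ((-t) • LinearMap.toContinuousLinearMap L)) f g

lemma heat_mono (μ : Ω → ℝ) (hL : IsGen μ L) {t : ℝ} (ht : 0 ≤ t) {f g : Ω → ℝ}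
    (hfg : ∀ ω, f ω ≤ g ω) : ∀ ω, heat L t f ω ≤ heat L t g ω := by
  intro ω
  have h := heat_nonneg L μ hL ht (f := g - f) (fun ω => by
    simp only [Pi.sub_apply]; linarith [hfg ω]) ω
  rw [heat_sub] at h
  simp only [Pi.sub_apply] at h
  linarith

lemma heat_pos (μ : Ω → ℝ) (hL : IsGen μ L) {t : ℝ} (ht : 0 ≤ t) {g : Ω → ℝ}
    (hg : ∀ ω, 0 < g ω) : ∀ ω, 0 < heat L t g ω := by
  intro ω
  have hne : Nonempty Ω := ⟨ω⟩
  have hune : (Finset.univ : Finset Ω).Nonempty := Finset.univ_nonempty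
  set m : ℝ := Finset.univ.inf' hune g with hm
  have hmpos : 0 < m := by
    obtain ⟨x, _, hx⟩ := Finset.exists_mem_eq_inf' hune g
    rw [hm, hx]; exact hg x
  have hmle : ∀ y, m ≤ g y := fun y => Finset.inf'_le _ (Finset.mem_univ y)
  have h1 : ∀ y, heat L t (fun _ => m) y ≤ heat L t g y :=
    heat_mono L μ hL ht (fun y => hmle y)
  have h2 : heat L t (fun _ => m) = fun _ => m := by
    have e : (fun _ : Ω => m) = m • (fun _ : Ω => (1:ℝ)) := by funext; simp
    rw [e, show heat L t (m • fun _ : Ω => (1:ℝ)) = m • heat L t (fun _ => 1) from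
      map_smul (NormedSpace.exp ((-t) • LinearMap.toContinuousLinearMap L)) m _,
      heat_one L hL.1]
  have := h1 ω
  rw [h2] at this
  exact lt_of_lt_of_le hmpos this

lemma heat_abs_le (μ : Ω → ℝ) (hL : IsGen μ L) {t : ℝ} (ht : 0 ≤ t) (f : Ω → ℝ) :
    ∀ ω, |heat L t f ω| ≤ heat L t (fun ω => |f ω|) ω := by
  intro ω
  have h1 := heat_mono L μ hL ht (f := f) (g := fun ω => |f ω|)
    (fun ω => le_abs_self _) ω
  have h2 := heat_mono L μ hL ht (f := fun ω => -|f ω|) (g := f)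
    (fun ω => neg_abs_le _) ω
  have h3 : heat L t (fun ω => -|f ω|) = -heat L t (fun ω => |f ω|) :=
    map_neg (NormedSpace.exp ((-t) • LinearMap.toContinuousLinearMap L)) _
  rw [h3] at h2
  simp only [Pi.neg_apply] at h2
  rw [abs_le]
  constructor <;> linarith

lemma heat_zero (f : Ω → ℝ) : heat L 0 f = f := by
  show (NormedSpace.exp ((-(0:ℝ)) • LinearMap.toContinuousLinearMap L)) f = f
  rw [neg_zero, zero_smul, NormedSpace.exp_zero, ContinuousLinearMap.one_apply]

lemma heat_heat (s t : ℝ) (f : Ω → ℝ) : heat L s (heat L t f) = heat L (s + t) f := by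
  show (NormedSpace.exp ((-s) • LinearMap.toContinuousLinearMap L))
      ((NormedSpace.exp ((-t) • LinearMap.toContinuousLinearMap L)) f)
    = (NormedSpace.exp ((-(s+t)) • LinearMap.toContinuousLinearMap L)) f
  let +nondep : NormedAlgebra ℚ ((Ω → ℝ) →L[ℝ] (Ω → ℝ)) := .restrictScalars ℚ ℝ _
  rw [← ContinuousLinearMap.mul_apply, ← NormedSpace.exp_add_of_commute]
  · rw [show (-s) • LinearMap.toContinuousLinearMap L + (-t) • LinearMap.toContinuousLinearMap L
      = (-(s+t)) • LinearMap.toContinuousLinearMap L from by module]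
  · show _ * _ = _ * _
    ext g ω
    simp only [ContinuousLinearMap.mul_apply, ContinuousLinearMap.coe_smul', Pi.smul_apply,
      smul_eq_mul, map_smul]
    ring

lemma heat_hasDerivAt (f : Ω → ℝ) (ω : Ω) (t : ℝ) :
    HasDerivAt (fun s => heat L s f ω) (-(L (heat L t f) ω)) t := by
  set A := LinearMap.toContinuousLinearMap L with hA
  have h0 := hasDerivAt_exp_smul_const (𝕂 := ℝ) (-A) t
  set Φ : ((Ω → ℝ) →L[ℝ] (Ω → ℝ)) →L[ℝ] ℝ :=
    (ContinuousLinearMap.proj (R := ℝ) (φ := fun _ : Ω => ℝ) ω).comp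
      (ContinuousLinearMap.apply ℝ (Ω → ℝ) f) with hΦ
  have happ : ∀ T : (Ω → ℝ) →L[ℝ] (Ω → ℝ), Φ T = T f ω := fun T => rfl
  have h1 := (Φ.hasFDerivAt.comp_hasDerivAt t h0)
  have hco : Commute (NormedSpace.exp (t • (-A))) (-A) := by
    apply Commute.exp_left
    exact (Commute.refl (-A)).smul_left t
  have hsmul : ∀ s : ℝ, s • (-A) = (-s) • A := fun s => by module
  have heq : (fun s : ℝ => Φ (NormedSpace.exp (s • (-A)))) = fun s => heat L s f ω := by
    funext s
    rw [happ, hsmul s]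
    rfl
  simp only [Function.comp_def] at h1
  rw [heq] at h1
  have hval : Φ (NormedSpace.exp (t • (-A)) * (-A)) = -(L (heat L t f) ω) := by
    rw [hco.eq, happ, ContinuousLinearMap.mul_apply, hsmul t]
    show (-A) (heat L t f) ω = -(L (heat L t f) ω)
    simp only [ContinuousLinearMap.neg_apply, Pi.neg_apply, hA, acl_apply]
  rw [hval] at h1
  exact h1

end HeatSec

lemma pexp_pos (μ : Ω → ℝ) (hμpos : ∀ ω, 0 < μ ω) (hne : Nonempty Ω) {f : Ω → ℝ}
    (hf : ∀ ω, 0 < f ω) : 0 < pexp μ f :=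
  Finset.sum_pos (fun ω _ => mul_pos (hμpos ω) (hf ω)) Finset.univ_nonempty

/-- constant-exponent decay of `E[(T_s g)^p]` -/
lemma const_exp_decay (μ : Ω → ℝ) (hμpos : ∀ ω, 0 < μ ω) (L : (Ω → ℝ) →ₗ[ℝ] (Ω → ℝ))
    (hL : IsGen μ L) (p0 : ℝ) (hp0 : 1 < p0) (g : Ω → ℝ) (hg : ∀ ω, 0 < g ω)
    {t : ℝ} (ht : 0 ≤ t) :
    pexp μ (fun ω => heat L t g ω ^ p0) ≤ pexp μ (fun ω => g ω ^ p0) := by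
  set N : ℝ → ℝ := fun s => ∑ ω, μ ω * (heat L s g ω ^ p0) with hN
  have hderiv : ∀ s ∈ Set.Icc 0 t, HasDerivAt N
      (∑ ω, μ ω * ((-(L (heat L s g) ω)) * p0 * (heat L s g ω) ^ (p0 - 1))) s := by
    intro s hs
    have hupos : ∀ ω, 0 < heat L s g ω := heat_pos L μ hL hs.1 hg
    apply HasDerivAt.fun_sum
    intro ω _
    have h1 : HasDerivAt (fun s => heat L s g ω) (-(L (heat L s g) ω)) s :=
      heat_hasDerivAt L g ω s
    have h2 := h1.rpow (hasDerivAt_const s p0) (hupos ω)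
    simp only [zero_mul, add_zero] at h2
    exact h2.const_mul (μ ω)
  have hderiv_nonpos : ∀ s ∈ Set.Icc 0 t,
      (∑ ω, μ ω * ((-(L (heat L s g) ω)) * p0 * (heat L s g ω) ^ (p0 - 1))) ≤ 0 := by
    intro s hs
    have hupos : ∀ ω, 0 < heat L s g ω := heat_pos L μ hL hs.1 hg
    have hD : (∑ ω, μ ω * ((-(L (heat L s g) ω)) * p0 * (heat L s g ω) ^ (p0 - 1)))
        = -p0 * dform μ L (fun ω => heat L s g ω ^ (p0 - 1)) (fun ω => heat L s g ω ^ (1:ℝ)) := by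
      rw [dform, pexp, Finset.mul_sum]
      apply Finset.sum_congr rfl
      intro ω _
      have : (fun ω => heat L s g ω ^ (1:ℝ)) = heat L s g := by
        funext x; rw [Real.rpow_one]
      rw [this]
      ring
    rw [hD]
    have := dform_pow_nonneg μ hμpos L hL (heat L s g) hupos
      (a := p0 - 1) (b := 1) (by linarith) one_pos
    nlinarith
  have hanti : AntitoneOn N (Set.Icc 0 t) := by
    apply antitoneOn_of_deriv_nonpos (convex_Icc 0 t)
    · intro s hs
      exact ((hderiv s hs).continuousAt).continuousWithinAt
    · rw [interior_Icc]
      intro s hs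
      exact ((hderiv s (Set.mem_Icc_of_Ioo hs)).differentiableAt).differentiableWithinAt
    · rw [interior_Icc]
      intro s hs
      rw [(hderiv s (Set.mem_Icc_of_Ioo hs)).deriv]
      exact hderiv_nonpos s (Set.mem_Icc_of_Ioo hs)
  have h0 : N 0 = pexp μ (fun ω => g ω ^ p0) := by
    rw [hN]
    simp only [heat_zero]
    rfl
  have hT : N t = pexp μ (fun ω => heat L t g ω ^ p0) := rfl
  have := hanti (Set.left_mem_Icc.2 ht) (Set.mem_Icc.2 ⟨ht, le_refl t⟩) ht
  rw [h0, hT] at this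
  exact this

/-- Gross' differentiation argument. -/
lemma gross (μ : Ω → ℝ) (hμpos : ∀ ω, 0 < μ ω) (hne : Nonempty Ω)
    (L : (Ω → ℝ) →ₗ[ℝ] (Ω → ℝ)) (hL : IsGen μ L) (C : ℝ) (hC : 0 < C)
    (q : ℝ) (hq : 1 < q) (T : ℝ) (hT : 0 ≤ T) (g : Ω → ℝ) (hg : ∀ ω, 0 < g ω)
    (hLSall : ∀ s, s ∈ Set.Icc 0 T → LS μ L (1 + (q-1)*Real.exp (4*s/C)) C) :
    (pexp μ fun ω => heat L T g ω ^ (1 + (q-1)*Real.exp (4*T/C)))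
        ^ (1/(1 + (q-1)*Real.exp (4*T/C)))
      ≤ (pexp μ fun ω => g ω ^ q) ^ (1/q) := by
  set P : ℝ → ℝ := fun s => 1 + (q-1)*Real.exp (4*s/C) with hP
  have hP1 : ∀ s, 1 < P s := by
    intro s
    have : 0 < (q-1)*Real.exp (4*s/C) := mul_pos (by linarith) (Real.exp_pos _)
    rw [hP]; dsimp only; linarith
  have hPd : ∀ s : ℝ, HasDerivAt P (4/C*(P s - 1)) s := by
    intro s
    have h1 : HasDerivAt (fun s : ℝ => 4*s/C) (4/C) s := by
      have : HasDerivAt (fun s : ℝ => (4/C) * s) (4/C) s := by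
        simpa using (hasDerivAt_id s).const_mul (4/C)
      convert this using 2 with u
      · ring
    have h2 := ((h1.exp).const_mul (q-1)).const_add 1
    have : P s - 1 = (q-1)*Real.exp (4*s/C) := by rw [hP]; ring
    rw [this]
    exact h2.congr_deriv (by ring)
  set N : ℝ → ℝ := fun s => ∑ ω, μ ω * (heat L s g ω ^ P s) with hN
  -- pointwise positivity
  have hupos : ∀ s, 0 ≤ s → ∀ ω, 0 < heat L s g ω := fun s hs => heat_pos L μ hL hs hg
  have hNpos : ∀ s, 0 ≤ s → 0 < N s := by
    intro s hs
    exact Finset.sum_pos (fun ω _ => mul_pos (hμpos ω)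
      (Real.rpow_pos_of_pos (hupos s hs ω) _)) Finset.univ_nonempty
  -- derivative of N
  have hNd : ∀ s, 0 ≤ s → HasDerivAt N
      (∑ ω, μ ω * ((-(L (heat L s g) ω)) * P s * (heat L s g ω) ^ (P s - 1)
        + (4/C*(P s - 1)) * (heat L s g ω) ^ (P s) * Real.log (heat L s g ω))) s := by
    intro s hs
    apply HasDerivAt.fun_sum
    intro ω _
    have h1 : HasDerivAt (fun s => heat L s g ω) (-(L (heat L s g) ω)) s :=
      heat_hasDerivAt L g ω s
    exact (h1.rpow (hPd s) (hupos s hs ω)).const_mul (μ ω)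
  -- F
  set F : ℝ → ℝ := fun s => (P s)⁻¹ * Real.log (N s) with hF
  have hFd : ∀ s, 0 ≤ s → HasDerivAt F
      ((-(4/C*(P s - 1)) / (P s)^2) * Real.log (N s)
        + (P s)⁻¹ * ((∑ ω, μ ω * ((-(L (heat L s g) ω)) * P s * (heat L s g ω) ^ (P s - 1)
        + (4/C*(P s - 1)) * (heat L s g ω) ^ (P s) * Real.log (heat L s g ω))) / N s)) s := by
    intro s hs
    have h1 : HasDerivAt (fun s => (P s)⁻¹) (-(4/C*(P s - 1)) / (P s)^2) s := by
      have := (hPd s).inv (by have := hP1 s; intro h; rw [h] at this; linarith)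
      exact this
    have h2 := (hNd s hs).log (ne_of_gt (hNpos s hs))
    exact h1.mul h2
  -- derivative nonpositive on [0, T]
  have hFd_nonpos : ∀ s, s ∈ Set.Icc 0 T →
      ((-(4/C*(P s - 1)) / (P s)^2) * Real.log (N s)
        + (P s)⁻¹ * ((∑ ω, μ ω * ((-(L (heat L s g) ω)) * P s * (heat L s g ω) ^ (P s - 1)
        + (4/C*(P s - 1)) * (heat L s g ω) ^ (P s) * Real.log (heat L s g ω))) / N s)) ≤ 0 := by
    intro s hs
    set u : Ω → ℝ := heat L s g with hu
    have hup : ∀ ω, 0 < u ω := hupos s hs.1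
    set p : ℝ := P s with hp
    have hp1 : 1 < p := hP1 s
    set p' : ℝ := 4/C*(p - 1) with hp'
    have hp'pos : 0 < p' := by
      rw [hp']
      exact mul_pos (by positivity) (by linarith)
    set E : ℝ := dform μ L (fun ω => u ω ^ (p - 1)) u with hE
    set Slog : ℝ := pexp μ (fun ω => u ω ^ p * Real.log (u ω ^ p)) with hSlog
    -- the sum equals -p*E + (p'/p) * Slog
    have hsum_eq : (∑ ω, μ ω * ((-(L u ω)) * p * u ω ^ (p - 1)
        + p' * u ω ^ p * Real.log (u ω)))
        = -p * E + (p'/p) * Slog := by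
      rw [hE, hSlog, dform, pexp, pexp, Finset.mul_sum, Finset.mul_sum, ← Finset.sum_add_distrib]
      apply Finset.sum_congr rfl
      intro ω _
      rw [Real.log_rpow (hup ω)]
      have hpne : p ≠ 0 := by linarith
      field_simp
    -- logSob
    have hLS := hLSall s hs
    have hent := hLS (fun ω => u ω) hup
    have hentE : entE μ (fun ω => u ω ^ p) ≤ C * p^2/(4*(p-1)) * E := by
      rw [hE]
      exact hent
    have hNsum : pexp μ (fun ω => u ω ^ p) = N s := by
      rw [pexp, hN]
    have hentE' : Slog - N s * Real.log (N s) ≤ C * p^2/(4*(p-1)) * E := by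
      have : entE μ (fun ω => u ω ^ p) = Slog - N s * Real.log (N s) := by
        rw [entE, hSlog, hNsum]
      rw [this] at hentE
      exact hentE
    have hcoef : p' * (C * p^2/(4*(p-1))) = p^2 := by
      rw [hp']
      have h1 : p - 1 ≠ 0 := by linarith
      have h2 : C ≠ 0 := ne_of_gt hC
      field_simp
    have hkey : p' * (Slog - N s * Real.log (N s)) ≤ p^2 * E := by
      have := mul_le_mul_of_nonneg_left hentE' (le_of_lt hp'pos)
      rw [← mul_assoc] at this
      rw [hcoef] at this
      exact this
    have hNs := hNpos s hs.1
    have hrw : ((-p') / p^2) * Real.log (N s)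
        + p⁻¹ * ((-p * E + (p'/p) * Slog) / N s)
        = (p' * (Slog - N s * Real.log (N s)) - p^2 * E) / (p^2 * N s) := by
      have h1 : p ≠ 0 := by linarith
      have h2 : N s ≠ 0 := ne_of_gt hNs
      field_simp
      ring
    rw [hsum_eq, hrw]
    apply div_nonpos_of_nonpos_of_nonneg
    · linarith
    · positivity
  -- antitone
  have hanti : AntitoneOn F (Set.Icc 0 T) := by
    apply antitoneOn_of_deriv_nonpos (convex_Icc 0 T)
    · intro s hs
      exact ((hFd s hs.1).continuousAt).continuousWithinAt
    · rw [interior_Icc]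
      intro s hs
      exact ((hFd s (le_of_lt hs.1)).differentiableAt).differentiableWithinAt
    · rw [interior_Icc]
      intro s hs
      rw [(hFd s (le_of_lt hs.1)).deriv]
      exact hFd_nonpos s (Set.mem_Icc_of_Ioo hs)
  have hFT : F T ≤ F 0 := hanti (Set.left_mem_Icc.2 hT) (Set.mem_Icc.2 ⟨hT, le_refl T⟩) hT
  -- unfold F 0 and F T
  have hP0 : P 0 = q := by
    rw [hP]; simp
  have hN0 : N 0 = pexp μ (fun ω => g ω ^ q) := by
    show (∑ ω, μ ω * heat L 0 g ω ^ P 0) = _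
    rw [heat_zero, hP0]
    rfl
  have hNT : N T = pexp μ (fun ω => heat L T g ω ^ P T) := rfl
  have hF0 : F 0 = q⁻¹ * Real.log (pexp μ (fun ω => g ω ^ q)) := by
    rw [hF]; dsimp only; rw [hP0, hN0]
  have hFTe : F T = (P T)⁻¹ * Real.log (N T) := rfl
  -- convert to rpow
  have hNTpos : 0 < N T := hNpos T hT
  have hN0pos : 0 < pexp μ (fun ω => g ω ^ q) := by
    rw [← hN0]; exact hNpos 0 (le_refl 0)
  have lhs_eq : (pexp μ fun ω => heat L T g ω ^ P T) ^ (1/(P T)) = Real.exp (F T) := by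
    rw [← hNT, hFTe, Real.rpow_def_of_pos hNTpos]
    congr 1
    rw [one_div]
    ring
  have rhs_eq : (pexp μ fun ω => g ω ^ q) ^ (1/q) = Real.exp (F 0) := by
    rw [hF0, Real.rpow_def_of_pos hN0pos]
    congr 1
    rw [one_div]
    ring
  calc (pexp μ fun ω => heat L T g ω ^ P T) ^ (1/(P T)) = Real.exp (F T) := lhs_eq
    _ ≤ Real.exp (F 0) := Real.exp_le_exp.2 hFT
    _ = (pexp μ fun ω => g ω ^ q) ^ (1/q) := rhs_eq.symm

theorem hypercontractivity (μ : Ω → ℝ)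
    (hμpos : ∀ ω, 0 < μ ω) (hμ1 : ∑ ω, μ ω = 1)
    (L : (Ω → ℝ) →ₗ[ℝ] (Ω → ℝ)) (hL : IsGen μ L)
    (r C : ℝ) (hr1 : 1 < r) (hr2 : r ≤ 2) (hC : 0 < C) (hLS : LogSob μ L r C)
    (p q : ℝ) (hqp : q ≤ p)
    (hcase : r / (r - 1) ≤ q ∨ (1 < q ∧ p ≤ r))
    (t : ℝ) (ht : C / 4 * Real.log ((p - 1) / (q - 1)) ≤ t)
    (f : Ω → ℝ) :
    pnormAbs μ p (heat L t f) ≤ pnormAbs μ q f := by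
  have hne : Nonempty Ω := by
    rcases isEmpty_or_nonempty Ω with hΩ | hne
    · exfalso
      rw [Finset.univ_eq_empty, Finset.sum_empty] at hμ1
      norm_num at hμ1
    · exact hne
  have hrr : 1 < r / (r-1) := by
    rw [lt_div_iff₀ (by linarith : (0:ℝ) < r - 1)]
    linarith
  have hq1 : 1 < q := by
    rcases hcase with h | h
    · linarith
    · exact h.1
  have hp1 : 1 < p := lt_of_lt_of_le hq1 hqp
  -- extract third branch of LogSob
  have hLSr : LS μ L r C := by
    rw [LogSob, if_neg (by linarith), if_neg (by linarith)] at hLS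
    exact hLS
  -- logSob at every exponent in [q, p]
  have hls : ∀ s, q ≤ s → s ≤ p → LS μ L s C := by
    intro s hqs hsp
    have hs1 : 1 < s := lt_of_lt_of_le hq1 hqs
    rcases hcase with h | h
    · -- r' ≤ q ≤ s : dualize
      have hrs : r / (r-1) ≤ s := le_trans h hqs
      have hs0 : (0:ℝ) < s - 1 := by linarith
      have hr0 : (0:ℝ) < r - 1 := by linarith
      have hcross : r ≤ s * (r - 1) := by
        rw [div_le_iff₀ hr0] at hrs
        linarith
      have hs'1 : 1 < s / (s-1) := by
        rw [lt_div_iff₀ hs0]; linarith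
      have hs'r : s / (s-1) ≤ r := by
        rw [div_le_iff₀ hs0]; nlinarith
      exact ls_dual μ L hL s C hs1 (ls_mono μ hμpos L hL r C hr1 hr2 hC hLSr _ hs'1 hs'r)
    · -- 1 < q ≤ s ≤ p ≤ r
      exact ls_mono μ hμpos L hL r C hr1 hr2 hC hLSr s hs1 (le_trans hsp h.2)
  -- the critical time
  set t₀ : ℝ := C / 4 * Real.log ((p - 1) / (q - 1)) with ht₀
  have hratio : (0:ℝ) < (p-1)/(q-1) := by
    apply div_pos <;> linarith
  have hratio1 : (1:ℝ) ≤ (p-1)/(q-1) := by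
    rw [le_div_iff₀ (by linarith : (0:ℝ) < q - 1)]; linarith
  have ht₀0 : 0 ≤ t₀ := by
    rw [ht₀]
    apply mul_nonneg (by positivity)
    exact Real.log_nonneg hratio1
  have htt : 0 ≤ t := le_trans ht₀0 ht
  have hPt₀ : 1 + (q-1)*Real.exp (4*t₀/C) = p := by
    rw [ht₀]
    rw [show 4*(C / 4 * Real.log ((p - 1) / (q - 1)))/C = Real.log ((p-1)/(q-1)) by
      field_simp]
    rw [Real.exp_log hratio]
    have hq0 : q - 1 ≠ 0 := by linarith
    field_simp
    ring
  -- reduce to positive g via ε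
  have key : ∀ ε : ℝ, 0 < ε →
      pnormAbs μ p (heat L t f)
        ≤ (pexp μ fun ω => (|f ω| + ε) ^ q) ^ (1/q) := by
    intro ε hε
    set g : Ω → ℝ := fun ω => |f ω| + ε with hg
    have hgpos : ∀ ω, 0 < g ω := fun ω => by
      have := abs_nonneg (f ω); rw [hg]; dsimp only; linarith
    -- step A : |heat f| ≤ heat g pointwise
    have hA : ∀ ω, |heat L t f ω| ≤ heat L t g ω := by
      intro ω
      refine le_trans (heat_abs_le L μ hL htt f ω) ?_
      exact heat_mono L μ hL htt (fun ω => by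
        rw [hg]; dsimp only; linarith [le_refl (|f ω|)]) ω
    have hgA : pnormAbs μ p (heat L t f)
        ≤ (pexp μ fun ω => heat L t g ω ^ p) ^ (1/p) := by
      rw [pnormAbs]
      apply Real.rpow_le_rpow ?_ ?_ (by positivity)
      · rw [pexp]
        apply Finset.sum_nonneg
        intro ω _
        exact mul_nonneg (le_of_lt (hμpos ω)) (Real.rpow_nonneg (abs_nonneg _) _)
      · rw [pexp, pexp]
        apply Finset.sum_le_sum
        intro ω _
        apply mul_le_mul_of_nonneg_left ?_ (le_of_lt (hμpos ω))
        exact Real.rpow_le_rpow (abs_nonneg _) (hA ω) (by linarith)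
    -- step B : hypercontractivity for g
    set h : Ω → ℝ := heat L (t - t₀) g with hh
    have hhpos : ∀ ω, 0 < h ω := heat_pos L μ hL (by linarith) hgpos
    have hsplit : heat L t g = heat L t₀ h := by
      rw [hh, heat_heat]
      congr 1
      ring
    have hLSall : ∀ s, s ∈ Set.Icc 0 t₀ → LS μ L (1 + (q-1)*Real.exp (4*s/C)) C := by
      intro s hs
      apply hls
      · have : (1:ℝ) ≤ Real.exp (4*s/C) := by
          rw [Real.one_le_exp_iff]
          have := hs.1
          positivity
        nlinarith
      · rw [← hPt₀]
        have : Real.exp (4*s/C) ≤ Real.exp (4*t₀/C) := by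
          apply Real.exp_le_exp.2
          apply div_le_div_of_nonneg_right ?_ hC.le
          linarith [hs.2]
        nlinarith
    have hgross := gross μ hμpos hne L hL C hC q hq1 t₀ ht₀0 h hhpos hLSall
    rw [hPt₀] at hgross
    have hcontr : pexp μ (fun ω => h ω ^ q) ≤ pexp μ (fun ω => g ω ^ q) := by
      rw [hh]
      exact const_exp_decay μ hμpos L hL q hq1 g hgpos (by linarith)
    have hqc : (pexp μ fun ω => h ω ^ q) ^ (1/q)
        ≤ (pexp μ fun ω => g ω ^ q) ^ (1/q) := by
      apply Real.rpow_le_rpow ?_ hcontr (by positivity)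
      rw [pexp]
      apply Finset.sum_nonneg
      intro ω _
      exact mul_nonneg (le_of_lt (hμpos ω)) (Real.rpow_nonneg (le_of_lt (hhpos ω)) _)
    calc pnormAbs μ p (heat L t f)
        ≤ (pexp μ fun ω => heat L t g ω ^ p) ^ (1/p) := hgA
      _ = (pexp μ fun ω => heat L t₀ h ω ^ p) ^ (1/p) := by rw [hsplit]
      _ ≤ (pexp μ fun ω => h ω ^ q) ^ (1/q) := hgross
      _ ≤ (pexp μ fun ω => g ω ^ q) ^ (1/q) := hqc
  -- take ε → 0
  set Φ : ℝ → ℝ := fun ε => (pexp μ fun ω => (|f ω| + ε) ^ q) ^ (1/q) with hΦ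
  have hq0 : (0:ℝ) < q := by linarith
  have hrq : Continuous fun x : ℝ => x ^ q :=
    continuous_iff_continuousAt.2 fun x => Real.continuousAt_rpow_const x q (Or.inr hq0.le)
  have hinner : Continuous fun ε : ℝ => pexp μ fun ω => (|f ω| + ε) ^ q := by
    apply continuous_finset_sum
    intro ω _
    exact continuous_const.mul (hrq.comp (continuous_const.add continuous_id))
  have hΦcont : ContinuousAt Φ 0 := by
    apply ContinuousAt.rpow_const hinner.continuousAt
    right
    positivity
  have hΦ0 : Φ 0 = pnormAbs μ q f := by
    rw [hΦ, pnormAbs]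
    simp
  have hlim : Filter.Tendsto Φ (nhdsWithin 0 (Set.Ioi 0)) (nhds (Φ 0)) :=
    hΦcont.continuousWithinAt
  have hfinal : pnormAbs μ p (heat L t f) ≤ Φ 0 := by
    apply ge_of_tendsto hlim
    filter_upwards [self_mem_nhdsWithin] with ε hε
    exact key ε hε
  rw [hΦ0] at hfinal
  exact hfinal

end HC

/-- hypercontractivity from the `r`-logSob inequality, `r ∈ (1,2]`. -/
theorem hypercontractivity [Fintype Ω] (μ : Ω → ℝ)
    (hμpos : ∀ ω, 0 < μ ω) (hμ1 : ∑ ω, μ ω = 1)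
    (L : (Ω → ℝ) →ₗ[ℝ] (Ω → ℝ)) (hL : IsGen μ L)
    (r C : ℝ) (hr1 : 1 < r) (hr2 : r ≤ 2) (hC : 0 < C) (hLS : LogSob μ L r C)
    (p q : ℝ) (hqp : q ≤ p)
    (hcase : r / (r - 1) ≤ q ∨ (1 < q ∧ p ≤ r))
    (t : ℝ) (ht : C / 4 * Real.log ((p - 1) / (q - 1)) ≤ t)
    (f : Ω → ℝ) :
    pnormAbs μ p (heat L t f) ≤ pnormAbs μ q f :=
  HC.hypercontractivity μ hμpos hμ1 L hL r C hr1 hr2 hC hLS p q hqp hcase t ht f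

end
end

section
/- Let p ∈ (−∞, 1). Then for every f : Ω → (0,∞), ‖f‖_p = inf { E[f·g] : g : Ω → (0,∞), ‖g‖_{p'} ≥ 1 }, where p' = p/(p−1) for p ≠ 0 and 0' = 0. (Reverse Hölder duality.) -/
open Real Finset

noncomputable section

variable {Ω : Type*}

lemma pexp_pos_s13 [Fintype Ω] {μ : Ω → ℝ} (hμpos : ∀ ω, 0 < μ ω) (hμ1 : ∑ ω, μ ω = 1)
    {h : Ω → ℝ} (hh : ∀ ω, 0 < h ω) : 0 < pexp μ h := by
  have hne : (Finset.univ : Finset Ω).Nonempty := by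
    by_contra hc
    rw [Finset.not_nonempty_iff_eq_empty] at hc
    rw [hc, Finset.sum_empty] at hμ1
    norm_num at hμ1
  exact Finset.sum_pos (fun ω _ => mul_pos (hμpos ω) (hh ω)) hne

/-- AM-GM: `exp (E log h) ≤ E h`. -/
lemma amgm [Fintype Ω] {μ : Ω → ℝ} (hμpos : ∀ ω, 0 < μ ω) (hμ1 : ∑ ω, μ ω = 1)
    {h : Ω → ℝ} (hh : ∀ ω, 0 < h ω) :
    Real.exp (pexp μ fun ω => Real.log (h ω)) ≤ pexp μ h := by
  have key := Real.geom_mean_le_arith_mean_weighted Finset.univ μ h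
    (fun ω _ => (hμpos ω).le) hμ1 (fun ω _ => (hh ω).le)
  calc Real.exp (pexp μ fun ω => Real.log (h ω))
      = ∏ ω, h ω ^ μ ω := by
        rw [pexp, Real.exp_sum]
        exact Finset.prod_congr rfl fun ω _ => by
          rw [Real.rpow_def_of_pos (hh ω), mul_comm]
    _ ≤ pexp μ h := key

/-- Reverse Hölder core inequality for `0 < p < 1`. -/
lemma holder_core [Fintype Ω] {μ : Ω → ℝ} (hμpos : ∀ ω, 0 < μ ω)
    {p : ℝ} (hp0 : 0 < p) (hp1 : p < 1) {f g : Ω → ℝ}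
    (hf : ∀ ω, 0 < f ω) (hg : ∀ ω, 0 < g ω) :
    pexp μ (fun ω => f ω ^ p) ≤
      (pexp μ fun ω => f ω * g ω) ^ p *
        (pexp μ fun ω => g ω ^ (p / (p - 1))) ^ (1 - p) := by
  have hp1' : 0 < 1 - p := by linarith
  have hpm : p - 1 ≠ 0 := by linarith
  have hpq : Real.HolderConjugate (1/p) (1/(1-p)) := by
    refine Real.holderConjugate_iff.mpr ⟨?_, ?_⟩
    · rw [lt_div_iff₀ hp0]; linarith
    · rw [one_div, one_div, inv_inv, inv_inv]; ring
  set u : Ω → ℝ := fun ω => (μ ω * (f ω * g ω)) ^ p with hu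
  set v : Ω → ℝ := fun ω => (μ ω * g ω ^ (p / (p - 1))) ^ (1 - p) with hv
  have hmu : ∀ ω, (0:ℝ) < μ ω * (f ω * g ω) := fun ω =>
    mul_pos (hμpos ω) (mul_pos (hf ω) (hg ω))
  have hmv : ∀ ω, (0:ℝ) < μ ω * g ω ^ (p / (p - 1)) := fun ω =>
    mul_pos (hμpos ω) (Real.rpow_pos_of_pos (hg ω) _)
  have key := Real.inner_le_Lp_mul_Lq (Finset.univ) u v hpq
  have h1 : ∀ ω, u ω * v ω = μ ω * f ω ^ p := by
    intro ω
    rw [hu, hv]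
    simp only
    rw [Real.rpow_def_of_pos (hmu ω), Real.rpow_def_of_pos (hmv ω), ← Real.exp_add,
        Real.log_mul (hμpos ω).ne' (mul_pos (hf ω) (hg ω)).ne',
        Real.log_mul (hf ω).ne' (hg ω).ne',
        Real.log_mul (hμpos ω).ne' (Real.rpow_pos_of_pos (hg ω) _).ne',
        Real.log_rpow (hg ω),
        Real.rpow_def_of_pos (hf ω)]
    conv_rhs => rw [← Real.exp_log (hμpos ω), ← Real.exp_add]
    congr 1
    field_simp
    ring
  have h2 : ∀ ω, |u ω| ^ (1/p) = μ ω * (f ω * g ω) := by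
    intro ω
    rw [hu]
    simp only
    rw [abs_of_pos (Real.rpow_pos_of_pos (hmu ω) _), ← Real.rpow_mul (hmu ω).le,
        mul_one_div_cancel hp0.ne', Real.rpow_one]
  have h3 : ∀ ω, |v ω| ^ (1/(1-p)) = μ ω * g ω ^ (p / (p - 1)) := by
    intro ω
    rw [hv]
    simp only
    rw [abs_of_pos (Real.rpow_pos_of_pos (hmv ω) _), ← Real.rpow_mul (hmv ω).le,
        mul_one_div_cancel hp1'.ne', Real.rpow_one]
  simp only [h2, h3] at key
  rw [Finset.sum_congr rfl (fun ω _ => h1 ω)] at key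
  rw [one_div_one_div, one_div_one_div] at key
  exact key

/-- Reverse Hölder: for `p < 1`, `p ≠ 0`, `‖f‖_p ‖g‖_{p'} ≤ E[fg]`. -/
lemma reverse_holder [Fintype Ω] {μ : Ω → ℝ} (hμpos : ∀ ω, 0 < μ ω) (hμ1 : ∑ ω, μ ω = 1)
    {p : ℝ} (hp : p < 1) (hp0 : p ≠ 0) {f g : Ω → ℝ}
    (hf : ∀ ω, 0 < f ω) (hg : ∀ ω, 0 < g ω)
    (hgn : 1 ≤ pnorm μ (hconj p) g) :
    pnorm μ p f ≤ pexp μ (fun ω => f ω * g ω) := by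
  have hA : 0 < pexp μ (fun ω => f ω ^ p) :=
    pexp_pos_s13 hμpos hμ1 (fun ω => Real.rpow_pos_of_pos (hf ω) _)
  have hE : 0 < pexp μ (fun ω => f ω * g ω) :=
    pexp_pos_s13 hμpos hμ1 (fun ω => mul_pos (hf ω) (hg ω))
  have hq0 : p / (p - 1) ≠ 0 := div_ne_zero hp0 (by linarith)
  have hconj_eq : hconj p = p / (p - 1) := by rw [hconj, if_neg hp0]
  rw [hconj_eq, pnorm, if_neg hq0] at hgn
  set B := pexp μ (fun ω => g ω ^ (p / (p - 1))) with hB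
  have hBpos : 0 < B := pexp_pos_s13 hμpos hμ1 (fun ω => Real.rpow_pos_of_pos (hg ω) _)
  rw [pnorm, if_neg hp0]
  rcases lt_or_gt_of_ne hp0 with hneg | hpos
  · -- p < 0 : p' = p/(p-1) ∈ (0,1); apply holder_core to g with conjugate exponent
    set q := p / (p - 1) with hq
    have hq0' : 0 < q := div_pos_of_neg_of_neg hneg (by linarith)
    have hq1 : q < 1 := by
      rw [hq, div_lt_one_of_neg (by linarith)]
      linarith
    have hpm : p - 1 ≠ 0 := by linarith
    have e : q - 1 = 1 / (p - 1) := by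
      rw [hq]; field_simp; ring
    have hqc : q / (q - 1) = p := by
      rw [e, hq, div_div_div_cancel_right₀]
      · exact div_one p
      · exact hpm
    have key := holder_core hμpos hq0' hq1 hg hf
    rw [hqc] at key
    -- key : B ≤ (E[g f])^q * (E f^p)^(1-q)
    have hgf : (pexp μ fun ω => g ω * f ω) = pexp μ (fun ω => f ω * g ω) := by
      unfold pexp; exact Finset.sum_congr rfl fun ω _ => by ring
    rw [hgf] at key
    -- 1 ≤ B since B^(1/q) ≥ 1 and q > 0
    have hB1 : 1 ≤ B := by
      have h := Real.rpow_le_rpow (by norm_num) hgn (le_of_lt hq0')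
      rwa [Real.one_rpow, ← Real.rpow_mul hBpos.le, one_div,
        inv_mul_cancel₀ hq0'.ne', Real.rpow_one] at h
    -- so 1 ≤ E^q * A^(1-q), hence A^(q-1) ≤ E^q, hence A^(1/p) ≤ E
    have h1 : (pexp μ (fun ω => f ω ^ p)) ^ (q - 1) ≤
        (pexp μ (fun ω => f ω * g ω)) ^ q := by
      have hAq : 0 < (pexp μ (fun ω => f ω ^ p)) ^ (1 - q) :=
        Real.rpow_pos_of_pos hA _
      rw [← div_le_iff₀ hAq] at key
      calc (pexp μ (fun ω => f ω ^ p)) ^ (q - 1)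
          = 1 / (pexp μ (fun ω => f ω ^ p)) ^ (1 - q) := by
            rw [one_div, ← Real.rpow_neg hA.le, neg_sub]
        _ ≤ B / (pexp μ (fun ω => f ω ^ p)) ^ (1 - q) := by gcongr
        _ ≤ _ := key
    have h2 := Real.rpow_le_rpow (Real.rpow_pos_of_pos hA _).le h1 (le_of_lt (one_div_pos.mpr hq0'))
    rwa [← Real.rpow_mul hA.le, ← Real.rpow_mul hE.le,
      mul_one_div_cancel hq0'.ne',
      Real.rpow_one, show (q - 1) * (1 / q) = 1 / p by
        rw [e, hq, one_div_div, div_mul_div_comm, one_mul,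
          div_mul_cancel_left₀ hpm, one_div]] at h2
  · -- 0 < p < 1
    have key := holder_core hμpos hpos hp hf hg
    -- B ≤ 1 since B^(1/(p/(p-1))) ≥ 1 with negative exponent
    have hq0' : p / (p - 1) < 0 := div_neg_of_pos_of_neg hpos (by linarith)
    have hB1 : B ≤ 1 := by
      have h := Real.rpow_le_one_of_one_le_of_nonpos hgn (le_of_lt hq0')
      rwa [← Real.rpow_mul hBpos.le, one_div,
        inv_mul_cancel₀ (ne_of_lt hq0'), Real.rpow_one] at h
    have hB1p : B ^ (1 - p) ≤ 1 :=
      Real.rpow_le_one hBpos.le hB1 (by linarith)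
    have key2 : pexp μ (fun ω => f ω ^ p) ≤ (pexp μ (fun ω => f ω * g ω)) ^ p := by
      calc pexp μ (fun ω => f ω ^ p) ≤ (pexp μ fun ω => f ω * g ω) ^ p * B ^ (1 - p) := key
        _ ≤ (pexp μ fun ω => f ω * g ω) ^ p * 1 :=
            mul_le_mul_of_nonneg_left hB1p (Real.rpow_nonneg hE.le _)
        _ = _ := mul_one _
    have h2 := Real.rpow_le_rpow hA.le key2 (le_of_lt (one_div_pos.mpr hpos))
    rwa [← Real.rpow_mul hE.le, mul_one_div_cancel hpos.ne', Real.rpow_one] at h2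

/-- reverse Hölder duality for `p < 1`. -/
theorem reverse_holder_duality [Fintype Ω] (μ : Ω → ℝ)
    (hμpos : ∀ ω, 0 < μ ω) (hμ1 : ∑ ω, μ ω = 1)
    (p : ℝ) (hp : p < 1) (f : Ω → ℝ) (hf : ∀ ω, 0 < f ω) :
    pnorm μ p f =
      sInf {x : ℝ | ∃ g : Ω → ℝ, (∀ ω, 0 < g ω) ∧ 1 ≤ pnorm μ (hconj p) g ∧
        x = pexp μ (fun ω => f ω * g ω)} := by
  set S := {x : ℝ | ∃ g : Ω → ℝ, (∀ ω, 0 < g ω) ∧ 1 ≤ pnorm μ (hconj p) g ∧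
      x = pexp μ (fun ω => f ω * g ω)} with hS
  have hmem : pnorm μ p f ∈ S := by
    by_cases hp0 : p = 0
    · subst hp0
      set N := Real.exp (pexp μ fun ω => Real.log (f ω)) with hN
      have hNpos : 0 < N := Real.exp_pos _
      refine ⟨fun ω => N / f ω, fun ω => div_pos hNpos (hf ω), ?_, ?_⟩
      · rw [hconj, if_pos rfl, pnorm, if_pos rfl]
        have hz : (pexp μ fun ω => Real.log (N / f ω)) = 0 := by
          have h1 : ∀ ω, Real.log (N / f ω)
              = (pexp μ fun ω => Real.log (f ω)) - Real.log (f ω) := fun ω => by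
            rw [hN, Real.log_div (Real.exp_pos _).ne' (hf ω).ne', Real.log_exp]
          unfold pexp
          rw [Finset.sum_congr rfl fun ω _ => by beta_reduce; rw [h1 ω]]
          simp only [mul_sub, Finset.sum_sub_distrib, ← Finset.sum_mul, hμ1, one_mul]
          rw [pexp]
          ring
        rw [hz, Real.exp_zero]
      · rw [pnorm, if_pos rfl, ← hN]
        have : ∀ ω, f ω * (N / f ω) = N := fun ω => by
          rw [mul_comm, div_mul_cancel₀ N (hf ω).ne']
        unfold pexp
        rw [Finset.sum_congr rfl fun ω _ => by beta_reduce; rw [this ω], ← Finset.sum_mul, hμ1, one_mul]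
    · have hpm : p - 1 ≠ 0 := by linarith
      set A := pexp μ (fun ω => f ω ^ p) with hA
      have hApos : 0 < A := pexp_pos_s13 hμpos hμ1 (fun ω => Real.rpow_pos_of_pos (hf ω) _)
      set q := p / (p - 1) with hq
      have hq0 : q ≠ 0 := div_ne_zero hp0 hpm
      have e1 : (p - 1) * q = p := by rw [hq]; field_simp
      have e2 : (p - 1) / p * q = 1 := by rw [hq]; field_simp
      have e3 : (1:ℝ) - (p - 1) / p = 1 / p := by field_simp; ring
      refine ⟨fun ω => f ω ^ (p - 1) / A ^ ((p - 1) / p),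
        fun ω => div_pos (Real.rpow_pos_of_pos (hf ω) _) (Real.rpow_pos_of_pos hApos _), ?_, ?_⟩
      · rw [hconj, if_neg hp0, ← hq, pnorm, if_neg hq0]
        have hptw : ∀ ω, (f ω ^ (p - 1) / A ^ ((p - 1) / p)) ^ q = f ω ^ p / A := by
          intro ω
          rw [Real.div_rpow (Real.rpow_nonneg (hf ω).le _) (Real.rpow_nonneg hApos.le _),
            ← Real.rpow_mul (hf ω).le, ← Real.rpow_mul hApos.le, e1, e2, Real.rpow_one]
        have hsum : (pexp μ fun ω => (f ω ^ (p - 1) / A ^ ((p - 1) / p)) ^ q) = 1 := by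
          unfold pexp
          rw [Finset.sum_congr rfl fun ω _ => by beta_reduce; rw [hptw ω]]
          simp only [← mul_div_assoc, ← Finset.sum_div]
          rw [← pexp, ← hA, div_self hApos.ne']
        rw [hsum, Real.one_rpow]
      · rw [pnorm, if_neg hp0, ← hA]
        have hptw : ∀ ω, f ω * (f ω ^ (p - 1) / A ^ ((p - 1) / p))
            = f ω ^ p / A ^ ((p - 1) / p) := by
          intro ω
          rw [← mul_div_assoc]
          congr 1
          rw [show f ω * f ω ^ (p - 1) = f ω ^ (1 + (p - 1)) from by
            rw [Real.rpow_add (hf ω), Real.rpow_one]]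
          norm_num
        unfold pexp
        rw [Finset.sum_congr rfl fun ω _ => by beta_reduce; rw [hptw ω]]
        simp only [← mul_div_assoc, ← Finset.sum_div]
        rw [← pexp, ← hA]
        rw [show A / A ^ ((p - 1) / p) = A ^ (1 - (p - 1) / p) from by
          rw [Real.rpow_sub hApos, Real.rpow_one], e3]
  have hlb : ∀ x ∈ S, pnorm μ p f ≤ x := by
    rintro x ⟨g, hgpos, hgn, rfl⟩
    by_cases hp0 : p = 0
    · subst hp0
      have hg0 : 0 ≤ pexp μ (fun ω => Real.log (g ω)) := by
        rw [hconj, if_pos rfl, pnorm, if_pos rfl, ← Real.exp_zero] at hgn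
        exact Real.exp_le_exp.mp hgn
      have hsplit : (pexp μ fun ω => Real.log (f ω * g ω))
          = (pexp μ fun ω => Real.log (f ω)) + pexp μ fun ω => Real.log (g ω) := by
        unfold pexp
        rw [← Finset.sum_add_distrib]
        exact Finset.sum_congr rfl fun ω _ => by
          beta_reduce; rw [Real.log_mul (hf ω).ne' (hgpos ω).ne']; ring
      rw [pnorm, if_pos rfl]
      calc Real.exp (pexp μ fun ω => Real.log (f ω))
          ≤ Real.exp ((pexp μ fun ω => Real.log (f ω)) + pexp μ fun ω => Real.log (g ω)) :=
            Real.exp_le_exp.mpr (le_add_of_nonneg_right hg0)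
        _ = Real.exp (pexp μ fun ω => Real.log (f ω * g ω)) := by rw [hsplit]
        _ ≤ pexp μ (fun ω => f ω * g ω) :=
            amgm hμpos hμ1 (fun ω => mul_pos (hf ω) (hgpos ω))
    · exact reverse_holder hμpos hμ1 hp hp0 hf hgpos hgn
  exact le_antisymm (le_csInf ⟨_, hmem⟩ hlb) (csInf_le ⟨_, fun x hx => hlb x hx⟩ hmem)


end
end

section
/- Let p, q ∈ (−∞, 1) and t ≥ 0. Assume that ‖T_t f‖_q ≥ ‖f‖_p for every f : Ω → (0,∞). Then also ‖T_t f‖_{p'} ≥ ‖f‖_{q'} for every f : Ω → (0,∞), where p' = p/(p−1), q' = q/(q−1) (with 0' = 0). -/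
open Real Finset

noncomputable section

variable {Ω : Type*}

namespace RHD

variable [Fintype Ω]

lemma exp_apply_eq_tsum (A : (Ω → ℝ) →L[ℝ] (Ω → ℝ)) (f : Ω → ℝ) (ω : Ω) :
    NormedSpace.exp A f ω = ∑' n : ℕ, (((n.factorial : ℝ)⁻¹)) * ((A ^ n) f ω) := by
  have hs : Summable fun n : ℕ => ((n.factorial : ℝ)⁻¹) • A ^ n := NormedSpace.expSeries_summable' A
  let φ : ((Ω → ℝ) →L[ℝ] (Ω → ℝ)) →L[ℝ] ℝ :=
    (ContinuousLinearMap.proj ω).comp (ContinuousLinearMap.apply ℝ (Ω → ℝ) f)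
  calc NormedSpace.exp A f ω = φ (NormedSpace.exp A) := rfl
    _ = φ (∑' n : ℕ, ((n.factorial : ℝ)⁻¹) • A ^ n) := by rw [NormedSpace.exp_eq_tsum ℝ]
    _ = ∑' n : ℕ, φ (((n.factorial : ℝ)⁻¹) • A ^ n) := φ.map_tsum hs
    _ = ∑' n : ℕ, ((n.factorial : ℝ)⁻¹) * ((A ^ n) f ω) := by
        refine tsum_congr fun n => ?_
        rw [map_smul]
        rfl

lemma summable_exp_apply (A : (Ω → ℝ) →L[ℝ] (Ω → ℝ)) (f : Ω → ℝ) (ω : Ω) :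
    Summable fun n : ℕ => (((n.factorial : ℝ)⁻¹)) * ((A ^ n) f ω) := by
  have hs : Summable fun n : ℕ => ((n.factorial : ℝ)⁻¹) • A ^ n := NormedSpace.expSeries_summable' A
  let φ : ((Ω → ℝ) →L[ℝ] (Ω → ℝ)) →L[ℝ] ℝ :=
    (ContinuousLinearMap.proj ω).comp (ContinuousLinearMap.apply ℝ (Ω → ℝ) f)
  have := hs.map φ φ.continuous
  have e : (⇑φ ∘ fun n : ℕ => ((n.factorial : ℝ)⁻¹) • A ^ n)
      = fun n : ℕ => (((n.factorial : ℝ)⁻¹)) * ((A ^ n) f ω) := by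
    funext n
    simp only [Function.comp_apply, map_smul]
    rfl
  rwa [e] at this

lemma exp_smul_one (r : ℝ) :
    NormedSpace.exp (r • (1 : (Ω → ℝ) →L[ℝ] (Ω → ℝ))) = Real.exp r • 1 := by
  rw [← Algebra.algebraMap_eq_smul_one, ← NormedSpace.algebraMap_exp_comm,
    Algebra.algebraMap_eq_smul_one, Real.exp_eq_exp_ℝ]

lemma Lbound (μ : Ω → ℝ) (L : (Ω → ℝ) →ₗ[ℝ] (Ω → ℝ)) (hL : IsGen μ L) :
    ∃ c : ℝ, 0 ≤ c ∧ ∀ g : Ω → ℝ, (∀ x, 0 ≤ g x) → ∀ ω, L g ω ≤ c * g ω := by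
  classical
  refine ⟨∑ x, |L (Pi.single x 1) x|, Finset.sum_nonneg (fun _ _ => abs_nonneg _), ?_⟩
  intro g hg ω
  set c := ∑ x, |L (Pi.single x 1) x| with hc
  set h : Ω → ℝ := g - g ω • (Pi.single ω 1 : Ω → ℝ) with hh
  have hh0 : h ω = 0 := by simp [hh]
  have hhnn : ∀ x, 0 ≤ h x := by
    intro x
    by_cases hx : x = ω
    · subst hx; simp [hh]
    · simp [hh, Pi.single_apply, hx, hg x]
  have hmax : ∀ x, (-h) x ≤ (-h) ω := by
    intro x
    simp only [Pi.neg_apply, hh0, neg_zero]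
    exact neg_nonpos_of_nonneg (hhnn x)
  have h1 : 0 ≤ L (-h) ω := hL.2.2.2 (-h) ω hmax
  have h2 : L h ω ≤ 0 := by
    rw [map_neg] at h1
    simpa using h1
  have h3 : L g ω = g ω * L (Pi.single ω 1) ω + L h ω := by
    have e : g = g ω • (Pi.single ω 1 : Ω → ℝ) + h := by
      funext x; simp [hh]
    rw [show L g = L (g ω • (Pi.single ω 1 : Ω → ℝ) + h) from by rw [← e], map_add, map_smul]
    simp [smul_eq_mul]
  have h4 : L (Pi.single ω 1) ω ≤ c :=
    le_trans (le_abs_self _)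
      (Finset.single_le_sum (f := fun x => |L (Pi.single x 1) x|)
        (fun _ _ => abs_nonneg _) (Finset.mem_univ ω))
  calc L g ω = g ω * L (Pi.single ω 1) ω + L h ω := h3
    _ ≤ g ω * c + 0 := add_le_add (mul_le_mul_of_nonneg_left h4 (hg ω)) h2
    _ = c * g ω := by ring

set_option synthInstance.maxHeartbeats 1000000 in
lemma heat_pos (μ : Ω → ℝ) (L : (Ω → ℝ) →ₗ[ℝ] (Ω → ℝ)) (hL : IsGen μ L) {t : ℝ} (ht : 0 ≤ t)
    {f : Ω → ℝ} (hf : ∀ ω, 0 < f ω) (ω : Ω) : 0 < heat L t f ω := by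
  obtain ⟨c, hc, hbound⟩ := Lbound μ L hL
  set A := (-t) • L.toContinuousLinearMap with hA
  set B := A + (t * c) • (1 : (Ω → ℝ) →L[ℝ] (Ω → ℝ)) with hB
  have hBnn : ∀ g : Ω → ℝ, (∀ x, 0 ≤ g x) → ∀ x, 0 ≤ B g x := by
    intro g hg x
    have e : B g x = t * (c * g x - L g x) := by
      simp only [hB, hA, ContinuousLinearMap.add_apply, ContinuousLinearMap.smul_apply,
        ContinuousLinearMap.one_apply, Pi.add_apply, Pi.smul_apply, smul_eq_mul,
        LinearMap.coe_toContinuousLinearMap']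
      ring
    rw [e]
    exact mul_nonneg ht (sub_nonneg.2 (hbound g hg x))
  have hBn : ∀ n : ℕ, ∀ g : Ω → ℝ, (∀ x, 0 ≤ g x) → ∀ x, 0 ≤ (B ^ n) g x := by
    intro n
    induction n with
    | zero => intro g hg x; simpa using hg x
    | succ n ih =>
      intro g hg x
      have e : (B ^ (n+1)) g = (B ^ n) (B g) := by rw [pow_succ]; rfl
      rw [e]
      exact ih (B g) (hBnn g hg) x
  have hsplit : A = (-(t * c)) • (1 : (Ω → ℝ) →L[ℝ] (Ω → ℝ)) + B := by
    rw [hB]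
    module
  have hcomm : Commute ((-(t * c)) • (1 : (Ω → ℝ) →L[ℝ] (Ω → ℝ))) B :=
    (Commute.one_left B).smul_left _
  have hexp : NormedSpace.exp A = Real.exp (-(t * c)) • NormedSpace.exp B := by
    rw [hsplit, NormedSpace.exp_add_of_commute_of_mem_ball (𝕂 := ℝ) hcomm
      ((NormedSpace.expSeries_radius_eq_top ℝ ((Ω → ℝ) →L[ℝ] (Ω → ℝ))).symm ▸ edist_lt_top _ _)
      ((NormedSpace.expSeries_radius_eq_top ℝ ((Ω → ℝ) →L[ℝ] (Ω → ℝ))).symm ▸ edist_lt_top _ _), exp_smul_one, smul_mul_assoc, one_mul]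
  have h1 : heat L t f ω = Real.exp (-(t * c)) * (NormedSpace.exp B f ω) := by
    show NormedSpace.exp A f ω = _
    rw [hexp]
    rfl
  rw [h1]
  have h2 : f ω ≤ NormedSpace.exp B f ω := by
    rw [exp_apply_eq_tsum]
    have h0 : (((0:ℕ).factorial : ℝ)⁻¹) * ((B ^ 0) f ω) = f ω := by simp
    calc f ω = (((0:ℕ).factorial : ℝ)⁻¹) * ((B ^ 0) f ω) := h0.symm
      _ ≤ ∑' n : ℕ, ((n.factorial : ℝ)⁻¹) * ((B ^ n) f ω) :=
        Summable.le_tsum (summable_exp_apply B f ω) 0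
          (fun n _ => mul_nonneg (by positivity) (hBn n f (fun x => (hf x).le) ω))
  exact mul_pos (Real.exp_pos _) (lt_of_lt_of_le (hf ω) h2)

lemma pexp_exp_eq_tsum (μ : Ω → ℝ) (A : (Ω → ℝ) →L[ℝ] (Ω → ℝ)) (f g : Ω → ℝ) :
    pexp μ (fun ω => g ω * NormedSpace.exp A f ω)
      = ∑' n : ℕ, ((n.factorial : ℝ)⁻¹) * pexp μ (fun ω => g ω * (A ^ n) f ω) := by
  have h1 : ∀ ω : Ω, μ ω * (g ω * NormedSpace.exp A f ω)
      = ∑' n : ℕ, μ ω * g ω * (((n.factorial : ℝ)⁻¹) * ((A ^ n) f ω)) := by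
    intro ω
    rw [exp_apply_eq_tsum A f ω, tsum_mul_left, ← mul_assoc]
  calc pexp μ (fun ω => g ω * NormedSpace.exp A f ω)
      = ∑ ω, ∑' n : ℕ, μ ω * g ω * (((n.factorial : ℝ)⁻¹) * ((A ^ n) f ω)) :=
        Finset.sum_congr rfl fun ω _ => h1 ω
    _ = ∑' n : ℕ, ∑ ω, μ ω * g ω * (((n.factorial : ℝ)⁻¹) * ((A ^ n) f ω)) :=
        (Summable.tsum_finsetSum (fun ω _ => ((summable_exp_apply A f ω).mul_left _))).symm
    _ = ∑' n : ℕ, ((n.factorial : ℝ)⁻¹) * pexp μ (fun ω => g ω * (A ^ n) f ω) := by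
        refine tsum_congr fun n => ?_
        rw [pexp, Finset.mul_sum]
        exact Finset.sum_congr rfl fun ω _ => by ring

lemma pexp_heat_symm (μ : Ω → ℝ) (L : (Ω → ℝ) →ₗ[ℝ] (Ω → ℝ)) (hL : IsGen μ L) (t : ℝ)
    (f g : Ω → ℝ) :
    pexp μ (fun ω => g ω * heat L t f ω) = pexp μ (fun ω => f ω * heat L t g ω) := by
  set A := (-t) • L.toContinuousLinearMap with hA
  have hA1 : ∀ u v : Ω → ℝ, pexp μ (fun ω => u ω * A v ω) = pexp μ (fun ω => v ω * A u ω) := by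
    intro u v
    have e : ∀ (w : Ω → ℝ) (ω : Ω), A w ω = -t * L w ω := by
      intro w ω
      simp [hA]
    have h2 := hL.2.1 u v
    simp only [pexp] at h2 ⊢
    simp only [e]
    calc ∑ ω, μ ω * (u ω * (-t * L v ω)) = -t * ∑ ω, μ ω * (u ω * L v ω) := by
          rw [Finset.mul_sum]; exact Finset.sum_congr rfl fun ω _ => by ring
      _ = -t * ∑ ω, μ ω * (v ω * L u ω) := by rw [h2]
      _ = ∑ ω, μ ω * (v ω * (-t * L u ω)) := by
          rw [Finset.mul_sum]; exact Finset.sum_congr rfl fun ω _ => by ring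
  have hAn : ∀ n : ℕ, ∀ u v : Ω → ℝ,
      pexp μ (fun ω => u ω * (A ^ n) v ω) = pexp μ (fun ω => v ω * (A ^ n) u ω) := by
    intro n
    induction n with
    | zero =>
      intro u v
      simp only [pow_zero, ContinuousLinearMap.one_apply, pexp]
      exact Finset.sum_congr rfl fun ω _ => by ring
    | succ n ih =>
      intro u v
      have e1 : (A ^ (n+1)) v = (A ^ n) (A v) := by rw [pow_succ]; rfl
      have e2 : (A ^ (n+1)) u = A ((A ^ n) u) := by rw [pow_succ']; rfl
      calc pexp μ (fun ω => u ω * (A ^ (n+1)) v ω)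
          = pexp μ (fun ω => u ω * (A ^ n) (A v) ω) := by rw [e1]
        _ = pexp μ (fun ω => (A v) ω * (A ^ n) u ω) := ih u (A v)
        _ = pexp μ (fun ω => (A ^ n) u ω * A v ω) := by
            simp only [pexp]; exact Finset.sum_congr rfl fun ω _ => by ring
        _ = pexp μ (fun ω => v ω * A ((A ^ n) u) ω) := hA1 ((A ^ n) u) v
        _ = pexp μ (fun ω => v ω * (A ^ (n+1)) u ω) := by rw [← e2]
  show pexp μ (fun ω => g ω * NormedSpace.exp A f ω)
      = pexp μ (fun ω => f ω * NormedSpace.exp A g ω)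
  rw [pexp_exp_eq_tsum, pexp_exp_eq_tsum]
  exact tsum_congr fun n => by rw [hAn n g f]

lemma pexp_pos {μ : Ω → ℝ} (hμpos : ∀ ω, 0 < μ ω) [Nonempty Ω] {f : Ω → ℝ}
    (hf : ∀ ω, 0 < f ω) : 0 < pexp μ f :=
  Finset.sum_pos (fun ω _ => mul_pos (hμpos ω) (hf ω)) Finset.univ_nonempty

lemma pnorm_pos {μ : Ω → ℝ} (hμpos : ∀ ω, 0 < μ ω) [Nonempty Ω] (p : ℝ) {f : Ω → ℝ}
    (hf : ∀ ω, 0 < f ω) : 0 < pnorm μ p f := by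
  unfold pnorm
  split
  · exact Real.exp_pos _
  · exact Real.rpow_pos_of_pos (pexp_pos hμpos (fun ω => Real.rpow_pos_of_pos (hf ω) _)) _

lemma young2 {w1 w2 a b : ℝ} (hw1 : 0 ≤ w1) (hw2 : 0 ≤ w2) (ha : 0 ≤ a) (hb : 0 ≤ b)
    (hw : w1 + w2 = 1) : a ^ w1 * b ^ w2 ≤ w1 * a + w2 * b := by
  have := Real.geom_mean_le_arith_mean_weighted Finset.univ ![w1, w2] ![a, b]
    (by intro i _; fin_cases i <;> simpa) (by simpa [Fin.sum_univ_two] using hw)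
    (by intro i _; fin_cases i <;> simpa)
  simpa [Fin.prod_univ_two, Fin.sum_univ_two] using this

lemma jensen_exp {μ : Ω → ℝ} (hμpos : ∀ ω, 0 < μ ω) (hμ1 : ∑ ω, μ ω = 1)
    {h : Ω → ℝ} (hh : ∀ ω, 0 < h ω) :
    Real.exp (pexp μ fun ω => Real.log (h ω)) ≤ pexp μ h := by
  have key := Real.geom_mean_le_arith_mean_weighted Finset.univ μ h
    (fun ω _ => (hμpos ω).le) hμ1 (fun ω _ => (hh ω).le)
  calc Real.exp (pexp μ fun ω => Real.log (h ω)) = ∏ ω, h ω ^ μ ω := by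
        rw [pexp, Real.exp_sum]
        exact Finset.prod_congr rfl fun ω _ => by
          rw [Real.rpow_def_of_pos (hh ω), mul_comm]
    _ ≤ ∑ ω, μ ω * h ω := key
    _ = pexp μ h := rfl

lemma hcore {μ : Ω → ℝ} (hμpos : ∀ ω, 0 < μ ω) [Nonempty Ω]
    {q : ℝ} (hq0 : 0 < q) (hq1 : q < 1) {u v : Ω → ℝ}
    (hu : ∀ ω, 0 < u ω) (hv : ∀ ω, 0 < v ω) :
    pexp μ (fun ω => u ω ^ q * v ω ^ (1 - q)) ≤ (pexp μ u) ^ q * (pexp μ v) ^ (1 - q) := by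
  set U := pexp μ u with hUdef
  set V := pexp μ v with hVdef
  have hU : 0 < U := pexp_pos hμpos hu
  have hV : 0 < V := pexp_pos hμpos hv
  set C := U ^ q * V ^ (1 - q) with hC
  have hCpos : 0 < C := mul_pos (Real.rpow_pos_of_pos hU _) (Real.rpow_pos_of_pos hV _)
  have key : ∀ ω, u ω ^ q * v ω ^ (1 - q) ≤ C * (q * (u ω / U) + (1 - q) * (v ω / V)) := by
    intro ω
    have h1 := young2 (w1 := q) (w2 := 1 - q) hq0.le (by linarith)
      (div_nonneg (hu ω).le hU.le) (div_nonneg (hv ω).le hV.le) (by ring)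
    have h2 : u ω ^ q * v ω ^ (1 - q) = C * ((u ω / U) ^ q * (v ω / V) ^ (1 - q)) := by
      rw [Real.div_rpow (hu ω).le hU.le, Real.div_rpow (hv ω).le hV.le, hC]
      have e1 : (0:ℝ) < U ^ q := Real.rpow_pos_of_pos hU _
      have e2 : (0:ℝ) < V ^ (1 - q) := Real.rpow_pos_of_pos hV _
      field_simp
    rw [h2]
    exact mul_le_mul_of_nonneg_left h1 hCpos.le
  have expand : pexp μ (fun ω => C * (q * (u ω / U) + (1 - q) * (v ω / V))) = C := by
    have e : ∀ ω : Ω, μ ω * (C * (q * (u ω / U) + (1 - q) * (v ω / V)))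
        = C * q / U * (μ ω * u ω) + C * (1 - q) / V * (μ ω * v ω) := by
      intro ω
      field_simp
    simp only [pexp, e, Finset.sum_add_distrib, ← Finset.mul_sum]
    have hU' : ∑ ω, μ ω * u ω = U := rfl
    have hV' : ∑ ω, μ ω * v ω = V := rfl
    rw [hU', hV']
    field_simp
    ring
  calc pexp μ (fun ω => u ω ^ q * v ω ^ (1 - q))
      ≤ pexp μ (fun ω => C * (q * (u ω / U) + (1 - q) * (v ω / V))) :=
        Finset.sum_le_sum fun ω _ => mul_le_mul_of_nonneg_left (key ω) (hμpos ω).le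
    _ = C := expand

lemma rev_holder_pos {μ : Ω → ℝ} (hμpos : ∀ ω, 0 < μ ω) [Nonempty Ω]
    {q : ℝ} (hq0 : 0 < q) (hq1 : q < 1) {u v : Ω → ℝ}
    (hu : ∀ ω, 0 < u ω) (hv : ∀ ω, 0 < v ω) :
    pnorm μ q u * pnorm μ (hconj q) v ≤ pexp μ (fun ω => u ω * v ω) := by
  have hq1' : q - 1 ≠ 0 := sub_ne_zero.mpr hq1.ne
  have hqc : hconj q = q / (q - 1) := by rw [hconj, if_neg hq0.ne']
  set S := pexp μ (fun ω => u ω * v ω) with hS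
  set W := pexp μ (fun ω => v ω ^ (q / (q - 1))) with hW
  have hSpos : 0 < S := pexp_pos hμpos (fun ω => mul_pos (hu ω) (hv ω))
  have hWpos : 0 < W := pexp_pos hμpos (fun ω => Real.rpow_pos_of_pos (hv ω) _)
  have core := hcore hμpos hq0 hq1 (u := fun ω => u ω * v ω)
    (v := fun ω => v ω ^ (q / (q - 1)))
    (fun ω => mul_pos (hu ω) (hv ω)) (fun ω => Real.rpow_pos_of_pos (hv ω) _)
  have lhs_eq : ∀ ω, (u ω * v ω) ^ q * (v ω ^ (q / (q - 1))) ^ (1 - q) = u ω ^ q := by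
    intro ω
    rw [Real.mul_rpow (hu ω).le (hv ω).le, ← Real.rpow_mul (hv ω).le]
    have e : q / (q - 1) * (1 - q) = -q := by field_simp; ring
    rw [e, mul_assoc, ← Real.rpow_add (hv ω), add_neg_cancel, Real.rpow_zero, mul_one]
  have core' : pexp μ (fun ω => u ω ^ q) ≤ S ^ q * W ^ (1 - q) := by
    have : pexp μ (fun ω => (u ω * v ω) ^ q * (v ω ^ (q / (q - 1))) ^ (1 - q))
        = pexp μ (fun ω => u ω ^ q) := by
      simp only [pexp]
      exact Finset.sum_congr rfl fun ω _ => by rw [lhs_eq ω]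
    rw [← this]
    exact core
  have hEu : 0 < pexp μ (fun ω => u ω ^ q) :=
    pexp_pos hμpos (fun ω => Real.rpow_pos_of_pos (hu ω) _)
  have step : pnorm μ q u ≤ (S ^ q * W ^ (1 - q)) ^ (1 / q) := by
    rw [pnorm, if_neg hq0.ne']
    exact Real.rpow_le_rpow hEu.le core' (by positivity)
  have rhsW : pnorm μ (hconj q) v = W ^ ((q - 1) / q) := by
    rw [pnorm, if_neg (by rw [hqc]; exact div_ne_zero hq0.ne' hq1'), hqc, hW, one_div_div]
  have final : (S ^ q * W ^ (1 - q)) ^ (1 / q) * W ^ ((q - 1) / q) = S := by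
    rw [Real.mul_rpow (Real.rpow_nonneg hSpos.le _) (Real.rpow_nonneg hWpos.le _),
      ← Real.rpow_mul hSpos.le, ← Real.rpow_mul hWpos.le, mul_assoc,
      ← Real.rpow_add hWpos]
    have e1 : q * (1 / q) = 1 := by field_simp
    have e2 : (1 - q) * (1 / q) + (q - 1) / q = 0 := by field_simp; ring
    rw [e1, e2, Real.rpow_one, Real.rpow_zero, mul_one]
  calc pnorm μ q u * pnorm μ (hconj q) v
      ≤ (S ^ q * W ^ (1 - q)) ^ (1 / q) * W ^ ((q - 1) / q) := by
        rw [rhsW]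
        exact mul_le_mul_of_nonneg_right step (Real.rpow_nonneg hWpos.le _)
    _ = S := final

lemma rev_holder {μ : Ω → ℝ} (hμpos : ∀ ω, 0 < μ ω) (hμ1 : ∑ ω, μ ω = 1) [Nonempty Ω]
    {q : ℝ} (hq : q < 1) {u v : Ω → ℝ} (hu : ∀ ω, 0 < u ω) (hv : ∀ ω, 0 < v ω) :
    pnorm μ q u * pnorm μ (hconj q) v ≤ pexp μ (fun ω => u ω * v ω) := by
  rcases lt_trichotomy q 0 with hq0 | hq0 | hq0
  · have hq1' : q - 1 ≠ 0 := sub_ne_zero.mpr (by linarith)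
    set r := q / (q - 1) with hr
    have hrpos : 0 < r := div_pos_iff.mpr (Or.inr ⟨hq0, by linarith⟩)
    have hrlt : r < 1 := by
      have h1 : 1/(q-1) < 0 := div_neg_of_pos_of_neg one_pos (by linarith)
      have h2 : r = 1 + 1/(q-1) := by
        rw [hr]
        field_simp
        ring
      linarith
    have hcq : hconj q = r := by rw [hconj, if_neg hq0.ne]
    have hcr : hconj r = q := by
      rw [hconj, if_neg hrpos.ne', hr, div_sub_one hq1',
        show q - (q-1) = 1 from by ring, one_div, div_inv_eq_mul, div_mul_cancel₀ _ hq1']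
    have main := rev_holder_pos hμpos hrpos hrlt hv hu
    rw [hcr] at main
    rw [hcq]
    calc pnorm μ q u * pnorm μ r v = pnorm μ r v * pnorm μ q u := mul_comm _ _
      _ ≤ pexp μ (fun ω => v ω * u ω) := main
      _ = pexp μ (fun ω => u ω * v ω) := by
          simp only [pexp]; exact Finset.sum_congr rfl fun ω _ => by ring
  · subst hq0
    have h0 : hconj 0 = 0 := by simp [hconj]
    rw [h0]
    simp only [pnorm, eq_self_iff_true, if_true]
    rw [← Real.exp_add]
    have e : (pexp μ fun ω => Real.log (u ω)) + (pexp μ fun ω => Real.log (v ω))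
        = pexp μ fun ω => Real.log (u ω * v ω) := by
      simp only [pexp, ← Finset.sum_add_distrib]
      exact Finset.sum_congr rfl fun ω _ => by
        rw [Real.log_mul (hu ω).ne' (hv ω).ne']; ring
    rw [e]
    exact jensen_exp hμpos hμ1 (fun ω => mul_pos (hu ω) (hv ω))
  · exact rev_holder_pos hμpos hq0 hq hu hv

theorem reverse_hyper_dual' (μ : Ω → ℝ)
    (hμpos : ∀ ω, 0 < μ ω) (hμ1 : ∑ ω, μ ω = 1)
    (L : (Ω → ℝ) →ₗ[ℝ] (Ω → ℝ)) (hL : IsGen μ L)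
    (p q t : ℝ) (hp : p < 1) (hq : q < 1) (ht : 0 ≤ t)
    (h : ∀ f : Ω → ℝ, (∀ ω, 0 < f ω) → pnorm μ p f ≤ pnorm μ q (heat L t f)) :
    ∀ f : Ω → ℝ, (∀ ω, 0 < f ω) →
      pnorm μ (hconj q) f ≤ pnorm μ (hconj p) (heat L t f) := by
  intro f hf
  have hΩ : Nonempty Ω := by
    by_contra hempty
    rw [not_nonempty_iff] at hempty
    rw [Finset.univ_eq_empty, Finset.sum_empty] at hμ1
    exact zero_ne_one hμ1
  have hTf : ∀ ω, 0 < heat L t f ω := heat_pos μ L hL ht hf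
  have master : ∀ g : Ω → ℝ, (∀ ω, 0 < g ω) →
      pnorm μ p g * pnorm μ (hconj q) f ≤ pexp μ (fun ω => g ω * heat L t f ω) := by
    intro g hg
    have hTg : ∀ ω, 0 < heat L t g ω := heat_pos μ L hL ht hg
    have h1 := rev_holder hμpos hμ1 hq hTg hf
    have h2 : pnorm μ p g ≤ pnorm μ q (heat L t g) := h g hg
    have h3 : pexp μ (fun ω => heat L t g ω * f ω) = pexp μ (fun ω => g ω * heat L t f ω) := by
      have c1 : pexp μ (fun ω => heat L t g ω * f ω)
          = pexp μ (fun ω => f ω * heat L t g ω) := by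
        simp only [pexp]; exact Finset.sum_congr rfl fun ω _ => by ring
      rw [c1]
      exact pexp_heat_symm μ L hL t g f
    calc pnorm μ p g * pnorm μ (hconj q) f
        ≤ pnorm μ q (heat L t g) * pnorm μ (hconj q) f :=
          mul_le_mul_of_nonneg_right h2 (pnorm_pos hμpos _ hf).le
      _ ≤ pexp μ (fun ω => heat L t g ω * f ω) := h1
      _ = pexp μ (fun ω => g ω * heat L t f ω) := h3
  by_cases hp0 : p = 0
  · subst hp0
    have hg : ∀ ω : Ω, 0 < (heat L t f ω)⁻¹ := fun ω => inv_pos.2 (hTf ω)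
    have hm := master (fun ω => (heat L t f ω)⁻¹) hg
    have e1 : pexp μ (fun ω => (heat L t f ω)⁻¹ * heat L t f ω) = 1 := by
      rw [pexp, ← hμ1]
      exact Finset.sum_congr rfl fun ω _ => by rw [inv_mul_cancel₀ (hTf ω).ne', mul_one]
    have e2 : pnorm μ 0 (fun ω => (heat L t f ω)⁻¹) = (pnorm μ 0 (heat L t f))⁻¹ := by
      simp only [pnorm, eq_self_iff_true, if_true]
      rw [← Real.exp_neg]
      congr 1
      simp only [pexp, Real.log_inv, mul_neg, ← Finset.sum_neg_distrib]
    rw [e1, e2] at hm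
    have hX : 0 < pnorm μ 0 (heat L t f) := pnorm_pos hμpos _ hTf
    have h6 := mul_le_mul_of_nonneg_left hm hX.le
    rw [← mul_assoc, mul_inv_cancel₀ hX.ne', one_mul, mul_one] at h6
    have hc0 : hconj (0:ℝ) = 0 := by simp [hconj]
    rw [hc0]
    exact h6
  · have hp1 : p - 1 ≠ 0 := sub_ne_zero.mpr hp.ne
    have hg : ∀ ω : Ω, 0 < heat L t f ω ^ (1/(p-1)) :=
      fun ω => Real.rpow_pos_of_pos (hTf ω) _
    have hm := master (fun ω => heat L t f ω ^ (1/(p-1))) hg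
    set S := pexp μ (fun ω => heat L t f ω ^ (p/(p-1))) with hS
    have hSpos : 0 < S := pexp_pos hμpos (fun ω => Real.rpow_pos_of_pos (hTf ω) _)
    have e1 : pexp μ (fun ω => heat L t f ω ^ (1/(p-1)) * heat L t f ω) = S := by
      rw [hS]
      simp only [pexp]
      refine Finset.sum_congr rfl fun ω _ => ?_
      congr 1
      rw [show heat L t f ω ^ (1/(p-1)) * heat L t f ω = heat L t f ω ^ (1/(p-1) + 1) from by
        rw [Real.rpow_add (hTf ω), Real.rpow_one]]
      congr 1
      field_simp
      ring
    have e2 : pnorm μ p (fun ω => heat L t f ω ^ (1/(p-1))) = S ^ (1/p) := by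
      rw [pnorm, if_neg hp0, hS]
      congr 1
      simp only [pexp]
      refine Finset.sum_congr rfl fun ω _ => ?_
      congr 1
      rw [← Real.rpow_mul (hTf ω).le, one_div, inv_mul_eq_div]
    rw [e1, e2] at hm
    have hcp : hconj p = p / (p - 1) := by rw [hconj, if_neg hp0]
    have goalr : pnorm μ (hconj p) (heat L t f) = S ^ ((p-1)/p) := by
      rw [pnorm, if_neg (by rw [hcp]; exact div_ne_zero hp0 hp1), hcp, one_div_div, ← hS]
    rw [goalr]
    have hXp : 0 < S ^ (1/p) := Real.rpow_pos_of_pos hSpos _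
    have h5 : pnorm μ (hconj q) f ≤ S / S ^ (1/p) := by
      rw [le_div_iff₀ hXp]
      rw [mul_comm]
      exact hm
    have h6 : S / S ^ (1/p) = S ^ ((p-1)/p) := by
      rw [show (p-1)/p = 1 - 1/p from by rw [sub_div, div_self hp0],
        Real.rpow_sub hSpos, Real.rpow_one]
    rw [← h6]
    exact h5

end RHD

/-- duality for reverse hypercontractive estimates. -/
theorem reverse_hyper_dual [Fintype Ω] (μ : Ω → ℝ)
    (hμpos : ∀ ω, 0 < μ ω) (hμ1 : ∑ ω, μ ω = 1)
    (L : (Ω → ℝ) →ₗ[ℝ] (Ω → ℝ)) (hL : IsGen μ L)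
    (p q t : ℝ) (hp : p < 1) (hq : q < 1) (ht : 0 ≤ t)
    (h : ∀ f : Ω → ℝ, (∀ ω, 0 < f ω) → pnorm μ p f ≤ pnorm μ q (heat L t f)) :
    ∀ f : Ω → ℝ, (∀ ω, 0 < f ω) →
      pnorm μ (hconj q) f ≤ pnorm μ (hconj p) (heat L t f) :=
  RHD.reverse_hyper_dual' μ hμpos hμ1 L hL p q t hp hq ht h

end
end
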